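/- arXiv:1603.00923 — 5 statements merged into one kernel-verified Lean document; each statement's English description precedes it below -/
import Mathlib

section
/- For every complex number z with |z| < 1, one has |1/(1-z)| ≤ (1/(1-|z|)) · exp(Re(z) - |z|). -/
open Complex Real

lemma key_aux (r : ℝ) (h0 : 0 ≤ r) : (1 - r) * Real.exp (2 * r) ≤ 1 + r := by
  have hd : ∀ x : ℝ, HasDerivAt (fun x : ℝ => 1 + x - (1 - x) * Real.exp (2 * x))
      (1 - ((0 - 1) * Real.exp (2 * x) + (1 - x) * (Real.exp (2 * x) * (2 * 1)))) x := by
    intro x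
    have he : HasDerivAt (fun x : ℝ => Real.exp (2 * x)) (Real.exp (2 * x) * (2 * 1)) x :=
      ((hasDerivAt_id x).const_mul (2 : ℝ)).exp
    have hp : HasDerivAt (fun x : ℝ => (1 - x) * Real.exp (2 * x))
        ((0 - 1) * Real.exp (2 * x) + (1 - x) * (Real.exp (2 * x) * (2 * 1))) x :=
      (((hasDerivAt_const x (1 : ℝ)).sub (hasDerivAt_id x))).mul he
    have hq : HasDerivAt (fun x : ℝ => 1 + x - (1 - x) * Real.exp (2 * x))
        (0 + 1 - ((0 - 1) * Real.exp (2 * x) + (1 - x) * (Real.exp (2 * x) * (2 * 1)))) x :=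
      ((hasDerivAt_const x (1 : ℝ)).add (hasDerivAt_id x)).sub hp
    simpa using hq
  have hmono : Monotone (fun x : ℝ => 1 + x - (1 - x) * Real.exp (2 * x)) := by
    apply monotone_of_deriv_nonneg
    · exact fun x => (hd x).differentiableAt
    · intro x
      rw [(hd x).deriv]
      have h1 : (1 - 2 * x) ≤ Real.exp (-(2 * x)) := by
        have := Real.add_one_le_exp (-(2 * x)); linarith
      have h2 : (1 - 2 * x) * Real.exp (2 * x) ≤ Real.exp (-(2 * x)) * Real.exp (2 * x) :=
        mul_le_mul_of_nonneg_right h1 (Real.exp_pos _).le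
      rw [← Real.exp_add] at h2
      simp at h2
      nlinarith [Real.exp_pos (2 * x)]
  have h := hmono h0
  simp at h
  nlinarith [h]

theorem abs_one_div_one_sub_le (z : ℂ) (hz : ‖z‖ < 1) :
    ‖1 / (1 - z)‖ ≤ (1 / (1 - ‖z‖)) * Real.exp (z.re - ‖z‖) := by
  set r := ‖z‖ with hr
  have hr0 : 0 ≤ r := norm_nonneg z
  have hxa : |z.re| ≤ r := Complex.abs_re_le_norm z
  have hxl : -r ≤ z.re := neg_le_of_abs_le hxa
  have hxu : z.re ≤ r := le_of_abs_le hxa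
  have h1r : 0 < 1 - r := by linarith
  set t := r - z.re with ht
  have ht0 : 0 ≤ t := by simp [ht]; linarith
  have ht2 : t ≤ 2 * r := by simp [ht]; linarith
  -- Step A : (1-r)^2 * exp (2t) ≤ (1-r)^2 + 2t
  have hA : (1 - r) ^ 2 * Real.exp (2 * t) ≤ (1 - r) ^ 2 + 2 * t := by
    rcases eq_or_lt_of_le hr0 with h | h
    · have hteq : t = 0 := by simp [ht, ← h] at *; linarith
      simp [hteq]
    · set s := t / (2 * r) with hs
      have h2r : (0:ℝ) < 2 * r := by linarith
      have hs0 : 0 ≤ s := div_nonneg ht0 h2r.le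
      have hs1 : s ≤ 1 := (div_le_one h2r).2 ht2
      have hconv := convexOn_exp.2 (Set.mem_univ (0 : ℝ)) (Set.mem_univ (4 * r))
        (by linarith : (0:ℝ) ≤ 1 - s) hs0 (by ring)
      simp only [smul_eq_mul, mul_zero, zero_add, Real.exp_zero, mul_one] at hconv
      have hst : s * (4 * r) = 2 * t := by
        rw [hs]; field_simp; ring
      rw [hst] at hconv
      -- key lemma squared
      have hk : (1 - r) * Real.exp (2 * r) ≤ 1 + r := key_aux r hr0
      have hk2 : (1 - r) ^ 2 * Real.exp (4 * r) ≤ (1 + r) ^ 2 := by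
        have he : Real.exp (4 * r) = Real.exp (2 * r) * Real.exp (2 * r) := by
          rw [← Real.exp_add]; ring_nf
        rw [he]
        have hnn : 0 ≤ (1 - r) * Real.exp (2 * r) := mul_nonneg h1r.le (Real.exp_pos _).le
        nlinarith [mul_le_mul hk hk hnn (by linarith : (0:ℝ) ≤ 1 + r)]
      have hexp : (0:ℝ) < Real.exp (4 * r) := Real.exp_pos _
      nlinarith [mul_le_mul_of_nonneg_left hconv (sq_nonneg (1 - r)),
        mul_le_mul_of_nonneg_left hk2 hs0]
  -- Step B : |1-z|^2 = 1 - 2 re z + r^2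
  have hB : (‖1 - z‖) ^ 2 = 1 - 2 * z.re + r ^ 2 := by
    have hr2 : r ^ 2 = z.re ^ 2 + z.im ^ 2 := by
      rw [hr, Complex.sq_norm, Complex.normSq_apply]; ring
    rw [Complex.sq_norm, Complex.normSq_apply]
    simp [Complex.sub_re, Complex.sub_im]
    nlinarith [hr2]
  -- Step C : (1-r) * exp t ≤ |1-z|
  have hC : (1 - r) * Real.exp t ≤ ‖1 - z‖ := by
    have hsq : ((1 - r) * Real.exp t) ^ 2 ≤ (‖1 - z‖) ^ 2 := by
      have he : Real.exp t ^ 2 = Real.exp (2 * t) := by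
        rw [sq, ← Real.exp_add]; ring_nf
      have : ((1 - r) * Real.exp t) ^ 2 = (1 - r) ^ 2 * Real.exp (2 * t) := by
        rw [mul_pow, he]
      rw [this, hB]
      have : (1 - r) ^ 2 + 2 * t = 1 - 2 * z.re + r ^ 2 := by rw [ht]; ring
      linarith [hA]
    have ha : 0 ≤ (1 - r) * Real.exp t := by positivity
    have hb : 0 ≤ ‖1 - z‖ := norm_nonneg _
    calc (1 - r) * Real.exp t = Real.sqrt (((1 - r) * Real.exp t) ^ 2) :=
          (Real.sqrt_sq ha).symm
      _ ≤ Real.sqrt ((‖1 - z‖) ^ 2) := Real.sqrt_le_sqrt hsq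
      _ = ‖1 - z‖ := Real.sqrt_sq hb
  -- finish
  have hpos : (0:ℝ) < (1 - r) * Real.exp t := by positivity
  have hmain : 1 / ‖1 - z‖ ≤ 1 / ((1 - r) * Real.exp t) :=
    one_div_le_one_div_of_le hpos hC
  have habs : ‖1 / (1 - z)‖ = 1 / ‖1 - z‖ := by
    rw [norm_div, norm_one]
  rw [habs]
  have hrhs : 1 / ((1 - r) * Real.exp t) = (1 / (1 - r)) * Real.exp (z.re - r) := by
    have : z.re - r = -t := by rw [ht]; ring
    rw [this, Real.exp_neg]
    field_simp
  rw [← hrhs]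
  exact hmain
end

section
/- For 0 < r < 1 and θ ∈ (-π, π], the infinite product p(q) = ∏_{j≥1} (1 - q^j)^{-1} evaluated at q = r e^{iθ} satisfies |p(r e^{iθ})| ≤ p(r) · exp( - α r θ² / ((1-r)((1-r)² + 2 r α θ²)) ), where α = 2/π². -/
open Real Complex

private lemma cos_lb (θ : ℝ) (h1 : -π < θ) (h2 : θ ≤ π) :
    2 / π ^ 2 * θ ^ 2 ≤ 1 - Real.cos θ := by
  have hπ := Real.pi_pos
  have hθ : |θ| ≤ π := abs_le.mpr ⟨h1.le, h2⟩
  have h3 : 2 / π * (|θ| / 2) ≤ Real.sin (|θ| / 2) :=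
    Real.mul_le_sin (by positivity) (by linarith)
  have h4 : Real.sin (|θ| / 2) ^ 2 = (1 - Real.cos θ) / 2 := by
    rw [Real.sin_sq_eq_half_sub]
    rw [show 2 * (|θ| / 2) = |θ| by ring, Real.cos_abs]
    ring
  have h5 : (2 / π * (|θ| / 2)) ^ 2 ≤ Real.sin (|θ| / 2) ^ 2 :=
    pow_le_pow_left₀ (by positivity) h3 2
  rw [h4] at h5
  have h6 : (2 / π * (|θ| / 2)) ^ 2 = θ ^ 2 / π ^ 2 := by
    field_simp; nlinarith [_root_.sq_abs θ]
  rw [h6] at h5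
  have : 2 / π ^ 2 * θ ^ 2 = 2 * (θ ^ 2 / π ^ 2) := by ring
  linarith

private lemma logabs_factor {z : ℂ} (hz : ‖z‖ < 1) :
    ‖z‖ - z.re ≤
      Real.log (‖1 - z‖) - Real.log (1 - ‖z‖) := by
  set s := ‖z‖ with hs
  have hs0 : 0 ≤ s := norm_nonneg z
  have h1 : HasSum (fun n : ℕ => (z ^ n / n : ℂ).re) (-Real.log (‖1 - z‖)) := by
    have h := Complex.hasSum_re
      (Complex.hasSum_taylorSeries_neg_log (z := z) (by simpa using hz))
    simpa [Complex.log_re] using h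
  have h2 : HasSum (fun n : ℕ => s ^ n / (n : ℝ)) (-Real.log (1 - s)) := by
    have hnorm : ‖(s : ℂ)‖ < 1 := by
      rw [Complex.norm_real, Real.norm_eq_abs, _root_.abs_of_nonneg hs0]; exact hz
    have h := Complex.hasSum_re (Complex.hasSum_taylorSeries_neg_log (z := (s : ℂ)) hnorm)
    have hfun : (fun n : ℕ => (((s : ℂ)) ^ n / (n : ℂ)).re) = fun n : ℕ => s ^ n / (n : ℝ) := by
      funext n
      rw [show ((s : ℂ)) ^ n / (n : ℂ) = ((s ^ n / (n : ℝ) : ℝ) : ℂ) by push_cast; ring,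
        Complex.ofReal_re]
    have hval : (-Complex.log (1 - (s : ℂ))).re = -Real.log (1 - s) := by
      rw [show (1 : ℂ) - (s : ℂ) = ((1 - s : ℝ) : ℂ) by push_cast; ring, Complex.neg_re,
        Complex.log_ofReal_re]
    rwa [hfun, hval] at h
  have h3 := h2.sub h1
  have h4 : ∀ n : ℕ, n ≠ 1 → 0 ≤ s ^ n / (n : ℝ) - (z ^ n / n : ℂ).re := by
    intro n _
    have := Complex.re_le_norm (z ^ n / (n : ℂ))
    have habs : ‖z ^ n / (n : ℂ)‖ = s ^ n / (n : ℝ) := by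
      rw [norm_div, norm_pow, Complex.norm_natCast]
    linarith [habs ▸ this]
  have h5 := le_hasSum h3 1 h4
  simp at h5
  linarith

set_option maxHeartbeats 1000000 in
/-- Lemma 1 of the paper: bound on `|p(q)|` for `q = r e^{iθ}`, where
`p(q) = ∏_{j ≥ 1} (1 - q^j)⁻¹` is the Euler partition generating function and `α = 2/π²`. -/
theorem abs_euler_prod_le (r θ : ℝ) (hr0 : 0 < r) (hr1 : r < 1) (hθ1 : -π < θ) (hθ2 : θ ≤ π) :
    ‖(∏' j : ℕ, (1 - (r * Complex.exp (θ * Complex.I)) ^ (j + 1))⁻¹)‖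
      ≤ (∏' j : ℕ, (1 - r ^ (j + 1))⁻¹)
        * Real.exp (-((2 / π ^ 2) * r * θ ^ 2
            / ((1 - r) * ((1 - r) ^ 2 + 2 * r * (2 / π ^ 2) * θ ^ 2)))) := by
  set q : ℂ := (r : ℂ) * Complex.exp (θ * Complex.I) with hq_def
  have hr1' : 0 < 1 - r := by linarith
  -- basic facts about q
  have habsq : ‖q‖ = r := by
    rw [hq_def, norm_mul, Complex.norm_real, Real.norm_eq_abs, Complex.norm_exp_ofReal_mul_I,
      _root_.abs_of_nonneg hr0.le, mul_one]
  have habs : ∀ j : ℕ, ‖q ^ (j + 1)‖ = r ^ (j + 1) := by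
    intro j; rw [norm_pow, habsq]
  have hrpow_le : ∀ j : ℕ, r ^ (j + 1) ≤ r := by
    intro j
    calc r ^ (j + 1) ≤ r ^ 1 := pow_le_pow_of_le_one hr0.le hr1.le (by omega)
    _ = r := pow_one r
  have hrpow_pos : ∀ j : ℕ, 0 < r ^ (j + 1) := fun j => pow_pos hr0 _
  have hlt : ∀ j : ℕ, ‖q ^ (j + 1)‖ < 1 := by
    intro j; rw [habs j]; linarith [hrpow_le j]
  have hre_pos : ∀ j : ℕ, 0 < (1 - q ^ (j + 1)).re := by
    intro j
    have := Complex.re_le_norm (q ^ (j + 1))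
    simp only [Complex.sub_re, Complex.one_re]
    linarith [hlt j]
  have hne : ∀ j : ℕ, (1 : ℂ) - q ^ (j + 1) ≠ 0 := by
    intro j h
    have := hre_pos j
    rw [h] at this
    simp at this
  have harg : ∀ j : ℕ, (1 - q ^ (j + 1)).arg ≠ π := fun j =>
    Complex.slitPlane_arg_ne_pi (Or.inl (hre_pos j))
  -- geometric summability
  have hgeom : Summable (fun j : ℕ => r ^ (j + 1)) := by
    have := (summable_geometric_of_lt_one hr0.le hr1).mul_left r
    simpa [pow_succ'] using this
  -- summability of complex logs
  have hnormsum : Summable (fun j : ℕ => ‖Complex.log ((1 - q ^ (j + 1))⁻¹)‖) := by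
    apply Summable.of_nonneg_of_le (fun j => norm_nonneg _)
      (f := fun j => r ^ (j + 1) * (r * (1 - r)⁻¹ / 2 + 1))
    · intro j
      have hz := hlt j
      have hz' : ‖q ^ (j + 1)‖ < 1 := by exact hz
      have hb := Complex.norm_log_one_sub_inv_sub_self_le hz'
      have htri : ‖Complex.log ((1 - q ^ (j + 1))⁻¹)‖ ≤
          ‖Complex.log ((1 - q ^ (j + 1))⁻¹) - q ^ (j + 1)‖ + ‖q ^ (j + 1)‖ := by
        simpa using norm_add_le (Complex.log ((1 - q ^ (j + 1))⁻¹) - q ^ (j + 1)) (q ^ (j + 1))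
      have hnq : ‖q ^ (j + 1)‖ = r ^ (j + 1) := by rw [habs j]
      rw [hnq] at htri hb
      have hinv : (1 - r ^ (j + 1))⁻¹ ≤ (1 - r)⁻¹ := by
        apply inv_anti₀ hr1'
        linarith [hrpow_le j]
      have hsq : (r ^ (j + 1)) ^ 2 ≤ r * r ^ (j + 1) := by
        calc (r ^ (j + 1)) ^ 2 = r ^ (j + 1) * r ^ (j + 1) := sq (r ^ (j + 1))
        _ ≤ r * r ^ (j + 1) := by
            apply mul_le_mul_of_nonneg_right (hrpow_le j) (hrpow_pos j).le
    -- combine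
      have h1 : (r ^ (j + 1)) ^ 2 * (1 - r ^ (j + 1))⁻¹ / 2 ≤
          r * r ^ (j + 1) * (1 - r)⁻¹ / 2 := by
        apply div_le_div_of_nonneg_right ?_ (by norm_num)
        apply mul_le_mul hsq hinv (inv_nonneg.mpr (by linarith [hrpow_le j])) (by positivity)
      calc ‖Complex.log ((1 - q ^ (j + 1))⁻¹)‖
          ≤ (r ^ (j + 1)) ^ 2 * (1 - r ^ (j + 1))⁻¹ / 2 + r ^ (j + 1) := by linarith
        _ ≤ r * r ^ (j + 1) * (1 - r)⁻¹ / 2 + r ^ (j + 1) := by linarith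
        _ = r ^ (j + 1) * (r * (1 - r)⁻¹ / 2 + 1) := by ring
    · exact hgeom.mul_right _
  have hlogsum : Summable (fun j : ℕ => Complex.log ((1 - q ^ (j + 1))⁻¹)) :=
    Summable.of_norm hnormsum
  -- the complex product as exp of a sum
  have hprodC : (∏' j : ℕ, (1 - q ^ (j + 1))⁻¹)
      = Complex.exp (∑' j : ℕ, Complex.log ((1 - q ^ (j + 1))⁻¹)) := by
    have := Complex.cexp_tsum_eq_tprod (f := fun j => (1 - q ^ (j + 1))⁻¹)
      (fun j => inv_ne_zero (hne j)) hlogsum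
    exact this.symm
  -- f, g, h
  set f : ℕ → ℝ := fun j => (Complex.log ((1 - q ^ (j + 1))⁻¹)).re with hf_def
  have hf_sum : Summable f :=
    Summable.of_norm_bounded hnormsum (fun j => by
      rw [Real.norm_eq_abs]; exact Complex.abs_re_le_norm _)
  have habsLHS : ‖∏' j : ℕ, (1 - q ^ (j + 1))⁻¹‖ = Real.exp (∑' j, f j) := by
    rw [hprodC, Complex.norm_exp, Complex.re_tsum hlogsum]
  have hf_eq : ∀ j : ℕ, f j = -Real.log (‖1 - q ^ (j + 1)‖) := by
    intro j
    rw [hf_def]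
    simp only []
    rw [Complex.log_re, norm_inv, Real.log_inv]
  -- real side
  have hr_pos : ∀ j : ℕ, 0 < 1 - r ^ (j + 1) := by
    intro j; linarith [hrpow_le j]
  set g : ℕ → ℝ := fun j => Real.log ((1 - r ^ (j + 1))⁻¹) with hg_def
  have hg_nonneg : ∀ j : ℕ, 0 ≤ g j := by
    intro j
    rw [hg_def]
    simp only [Real.log_inv]
    have : Real.log (1 - r ^ (j + 1)) ≤ 0 :=
      Real.log_nonpos (by linarith [hr_pos j]) (by linarith [hrpow_pos j])
    linarith
  have hg_sum : Summable g := by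
    apply Summable.of_nonneg_of_le hg_nonneg (f := fun j => r ^ (j + 1) * (1 - r)⁻¹)
    · intro j
      rw [hg_def]
      simp only []
      have h1 : Real.log ((1 - r ^ (j + 1))⁻¹) ≤ (1 - r ^ (j + 1))⁻¹ - 1 :=
        Real.log_le_sub_one_of_pos (inv_pos.mpr (hr_pos j))
      have h2 : (1 - r ^ (j + 1))⁻¹ - 1 = r ^ (j + 1) / (1 - r ^ (j + 1)) := by
        field_simp [(hr_pos j).ne']
        ring
      have h3 : r ^ (j + 1) / (1 - r ^ (j + 1)) ≤ r ^ (j + 1) / (1 - r) := by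
        apply div_le_div_of_nonneg_left (hrpow_pos j).le hr1'
        linarith [hrpow_le j]
      simp only [div_eq_mul_inv] at h2 h3
      linarith
    · exact hgeom.mul_right _
  have hprodR : (∏' j : ℕ, (1 - r ^ (j + 1))⁻¹) = Real.exp (∑' j, g j) := by
    have := Real.rexp_tsum_eq_tprod (f := fun j => (1 - r ^ (j + 1))⁻¹)
      (fun j => inv_pos.mpr (hr_pos j)) hg_sum
    exact this.symm
  -- h and its sum
  set h : ℕ → ℝ := fun j => r ^ (j + 1) - (q ^ (j + 1)).re with hh_def
  have hq_norm : ‖q‖ < 1 := by rw [habsq]; exact hr1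
  have hq1 : HasSum (fun j : ℕ => r ^ (j + 1)) (r * (1 - r)⁻¹) := by
    have := (hasSum_geometric_of_lt_one hr0.le hr1).mul_left r
    simpa [pow_succ'] using this
  have hq2 : HasSum (fun j : ℕ => (q ^ (j + 1)).re) ((q * (1 - q)⁻¹).re) := by
    apply Complex.hasSum_re
    have := (hasSum_geometric_of_norm_lt_one hq_norm).mul_left q
    simpa [pow_succ'] using this
  have hh_hasSum : HasSum h (r * (1 - r)⁻¹ - (q * (1 - q)⁻¹).re) := hq1.sub hq2
  -- per-factor inequality
  have hkey : ∀ j : ℕ, f j ≤ g j - h j := by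
    intro j
    have hpf := logabs_factor (z := q ^ (j + 1)) (hlt j)
    rw [habs j] at hpf
    rw [hf_eq j, hg_def, hh_def]
    simp only [Real.log_inv]
    linarith
  -- sum inequality
  have hsum_le : (∑' j, f j) ≤ (∑' j, g j) - (r * (1 - r)⁻¹ - (q * (1 - q)⁻¹).re) := by
    have h1 : (∑' j, f j) ≤ ∑' j, (g j - h j) :=
      hf_sum.tsum_le_tsum hkey (hg_sum.sub hh_hasSum.summable)
    rwa [Summable.tsum_sub hg_sum hh_hasSum.summable, hh_hasSum.tsum_eq] at h1
  -- compute the real part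
  set c : ℝ := Real.cos θ with hc_def
  set si : ℝ := Real.sin θ with hsi_def
  have hsc : si ^ 2 + c ^ 2 = 1 := Real.sin_sq_add_cos_sq θ
  have hqre : q.re = r * c := by
    rw [hq_def, Complex.mul_re, Complex.ofReal_re, Complex.ofReal_im,
      Complex.exp_ofReal_mul_I_re, Complex.exp_ofReal_mul_I_im]
    simp [hc_def]
  have hqim : q.im = r * si := by
    rw [hq_def, Complex.mul_im, Complex.ofReal_re, Complex.ofReal_im,
      Complex.exp_ofReal_mul_I_re, Complex.exp_ofReal_mul_I_im]
    simp [hsi_def]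
  have hc1 : c ≤ 1 := Real.cos_le_one θ
  have hN_pos : 0 < 1 - 2 * r * c + r ^ 2 := by nlinarith
  have hreq : (q * (1 - q)⁻¹).re = (r * c - r ^ 2) / (1 - 2 * r * c + r ^ 2) := by
    rw [← div_eq_mul_inv, Complex.div_re, Complex.normSq_apply]
    rw [Complex.sub_re, Complex.sub_im, Complex.one_re, Complex.one_im, hqre, hqim]
    rw [← add_div]
    have hden : (1 - r * c) * (1 - r * c) + (0 - r * si) * (0 - r * si)
        = 1 - 2 * r * c + r ^ 2 := by nlinarith
    rw [hden]
    congr 1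
    nlinarith
  -- the elementary inequality
  have hAc : 2 / π ^ 2 * θ ^ 2 ≤ 1 - c := cos_lb θ hθ1 hθ2
  have hA0 : 0 ≤ 2 / π ^ 2 * θ ^ 2 := by positivity
  have hE : (2 / π ^ 2) * r * θ ^ 2
      / ((1 - r) * ((1 - r) ^ 2 + 2 * r * (2 / π ^ 2) * θ ^ 2))
      ≤ r * (1 - r)⁻¹ - (q * (1 - q)⁻¹).re := by
    rw [hreq]
    set A : ℝ := 2 / π ^ 2 * θ ^ 2 with hA_def
    set u : ℝ := 1 - c with hu_def
    have hu0 : 0 ≤ u := by linarith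
    have hN_eq : 1 - 2 * r * c + r ^ 2 = (1 - r) ^ 2 + 2 * r * u := by
      rw [hu_def]; ring
    have hNpos : 0 < (1 - r) ^ 2 + 2 * r * u := by nlinarith
    have hdpos : 0 < (1 - r) ^ 2 + 2 * r * A := by nlinarith
    have hval : r * (1 - r)⁻¹ - (r * c - r ^ 2) / (1 - 2 * r * c + r ^ 2)
        = r * (1 + r) * u / ((1 - r) * ((1 - r) ^ 2 + 2 * r * u)) := by
      rw [hN_eq]
      field_simp
      ring_nf
      rw [hu_def]; ring
    rw [hval]
    rw [show (2 / π ^ 2) * r * θ ^ 2 = r * A by rw [hA_def]; ring,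
      show 2 * r * (2 / π ^ 2) * θ ^ 2 = 2 * r * A by rw [hA_def]; ring]
    rw [div_le_div_iff₀ (by positivity) (by positivity)]
    have t1 : 0 ≤ (r * (1 - r) * (1 - r) ^ 2) * (u - A) :=
      mul_nonneg (mul_nonneg (mul_nonneg hr0.le hr1'.le) (sq_nonneg _)) (sub_nonneg.mpr hAc)
    have t2 : 0 ≤ (r * (1 - r) * (1 - r) ^ 2) * (r * u) :=
      mul_nonneg (mul_nonneg (mul_nonneg hr0.le hr1'.le) (sq_nonneg _))
        (mul_nonneg hr0.le hu0)
    have t3 : 0 ≤ (r ^ 3 * (1 - r)) * (A * u) :=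
      mul_nonneg (mul_nonneg (pow_nonneg hr0.le 3) hr1'.le) (mul_nonneg hA0 hu0)
    nlinarith [t1, t2, t3]
  -- put everything together
  rw [habsLHS, hprodR, ← Real.exp_add, Real.exp_le_exp]
  have := hsum_le
  linarith [hE]
end

section
/- A partition λ of an even integer n is the size-ordered degree sequence of a simple graph if and only if ∑_{j=1}^i λ'_j ≥ ∑_{j=1}^i λ_j + i for all 1 ≤ i ≤ D(λ), where λ' is the conjugate partition and D(λ) is the size of the Durfee square of λ. -/
open Finset
set_option linter.unusedSectionVars false
set_option linter.unusedVariables false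

def EGineq (m : ℕ) (l : ℕ → ℕ) (i : ℕ) : Prop :=
  ∑ j ∈ range i, l j ≤ i * (i - 1) + ∑ j ∈ Ico i m, min (l j) i

lemma conj_sum (m i : ℕ) (l : ℕ → ℕ) :
    ∑ j ∈ range i, ((range m).filter (fun t => j + 1 ≤ l t)).card
      = ∑ t ∈ range m, min (l t) i := by
  have h1 : ∀ j, ((range m).filter (fun t => j + 1 ≤ l t)).card
      = ∑ t ∈ range m, (if j + 1 ≤ l t then 1 else 0) := fun j => by
    rw [Finset.card_filter]
  have h2 : ∀ t, ∑ j ∈ range i, (if j + 1 ≤ l t then 1 else 0) = min (l t) i := by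
    intro t
    rw [← Finset.card_filter]
    have : (range i).filter (fun j => j + 1 ≤ l t) = range (min (l t) i) := by
      ext j; simp only [mem_filter, mem_range, lt_min_iff]; omega
    rw [this, card_range]
  calc ∑ j ∈ range i, ((range m).filter (fun t => j + 1 ≤ l t)).card
      = ∑ j ∈ range i, ∑ t ∈ range m, (if j + 1 ≤ l t then 1 else 0) := by
        exact Finset.sum_congr rfl fun j _ => h1 j
    _ = ∑ t ∈ range m, ∑ j ∈ range i, (if j + 1 ≤ l t then 1 else 0) := Finset.sum_comm
    _ = ∑ t ∈ range m, min (l t) i := Finset.sum_congr rfl fun t _ => h2 t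

section Durfee
variable {m : ℕ} {l : ℕ → ℕ}

/-- The Durfee set is an initial segment. -/
lemma durfee_eq_range (hanti : Antitone l) :
    (range m).filter (fun t => t + 1 ≤ l t)
      = range ((range m).filter (fun t => t + 1 ≤ l t)).card := by
  set s := (range m).filter (fun t => t + 1 ≤ l t) with hs
  have hdown : ∀ t ∈ s, ∀ t', t' < t → t' ∈ s := by
    intro t ht t' htt'
    simp only [hs, mem_filter, mem_range] at ht ⊢
    exact ⟨lt_trans htt' ht.1, by have := hanti (le_of_lt htt'); omega⟩
  have hlt : ∀ x ∈ s, x < s.card := by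
    intro x hx
    have hsub : range (x + 1) ⊆ s := by
      intro y hy
      rcases Nat.lt_succ_iff_lt_or_eq.mp (mem_range.mp hy) with h | h
      · exact hdown x hx y h
      · exact h ▸ hx
    have := card_le_card hsub
    simpa using this
  apply Finset.eq_of_subset_of_card_le
  · intro x hx; exact mem_range.mpr (hlt x hx)
  · simp
end Durfee

section Durfee2
variable {m : ℕ} {l : ℕ → ℕ}

lemma durfee_pos_part (hanti : Antitone l) {i t : ℕ}
    (hi : i ≤ ((range m).filter (fun t => t + 1 ≤ l t)).card) (ht : t < i) : i ≤ l t := by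
  set D := ((range m).filter (fun t => t + 1 ≤ l t)).card with hD
  have h1 : i - 1 ∈ (range m).filter (fun t => t + 1 ≤ l t) := by
    rw [durfee_eq_range hanti, ← hD]; exact mem_range.mpr (by omega)
  have h2 := (mem_filter.mp h1).2
  have := hanti (show t ≤ i - 1 by omega)
  omega

lemma durfee_big_part (hanti : Antitone l) (hzero : ∀ j, m ≤ j → l j = 0) {t : ℕ}
    (ht : ((range m).filter (fun t => t + 1 ≤ l t)).card ≤ t) :
    l t ≤ ((range m).filter (fun t => t + 1 ≤ l t)).card := by
  set D := ((range m).filter (fun t => t + 1 ≤ l t)).card with hD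
  by_cases hDm : D < m
  · have hnot : D ∉ (range m).filter (fun t => t + 1 ≤ l t) := by
      rw [durfee_eq_range hanti, ← hD]; simp
    simp only [mem_filter, mem_range, hDm, true_and, not_le] at hnot
    have := hanti ht; omega
  · have : m ≤ t := by omega
    rw [hzero t this]; omega

lemma durfee_le (hanti : Antitone l) :
    ((range m).filter (fun t => t + 1 ≤ l t)).card ≤ m := by
  calc _ ≤ (range m).card := card_filter_le _ _
    _ = m := card_range m

/-- Nash-Williams inequality at `i` is equivalent to Erdős–Gallai at `i`, for `i ≤ D`. -/
lemma nw_iff_eg (hanti : Antitone l) {i : ℕ} (h1 : 1 ≤ i)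
    (hi : i ≤ ((range m).filter (fun t => t + 1 ≤ l t)).card) :
    (∑ j ∈ range i, l j + i
        ≤ ∑ j ∈ range i, ((range m).filter (fun t => j + 1 ≤ l t)).card)
      ↔ EGineq m l i := by
  have him : i ≤ m := le_trans hi (durfee_le hanti)
  rw [conj_sum]
  have hsplit : ∑ t ∈ range m, min (l t) i
      = ∑ t ∈ range i, min (l t) i + ∑ t ∈ Ico i m, min (l t) i := by
    rw [range_eq_Ico, ← Finset.sum_Ico_consecutive _ (Nat.zero_le i) him, range_eq_Ico]
  have hfirst : ∑ t ∈ range i, min (l t) i = i * i := by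
    rw [Finset.sum_congr rfl (fun t ht => ?_), sum_const, card_range, smul_eq_mul]
    exact min_eq_right (durfee_pos_part hanti hi (mem_range.mp ht))
  have hii : i * i = i * (i - 1) + i := by
    obtain ⟨i', rfl⟩ : ∃ i', i = i' + 1 := ⟨i - 1, by omega⟩
    simp [Nat.add_sub_cancel]; ring
  rw [hsplit, hfirst, EGineq]
  omega

end Durfee2

lemma eg_arith {D e T : ℕ} (he : 1 ≤ e) (hT : T ≤ e * D) :
    D * (D - 1) + 2 * T ≤ (D + e) * (D + e - 1) := by
  obtain ⟨f, rfl⟩ : ∃ f, e = f + 1 := ⟨e - 1, by omega⟩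
  cases D with
  | zero => simp at hT; simp [hT]
  | succ d =>
    have h1 : (d + 1) * (d + 1 - 1) = (d+1) * d := rfl
    have h2 : (d + 1 + (f+1)) * (d + 1 + (f+1) - 1) = (d+f+2) * (d+f+1) := by
      congr 1 <;> omega
    rw [h1, h2]
    nlinarith [hT, sq_nonneg f]

lemma eg_all (m : ℕ) (l : ℕ → ℕ) (hanti : Antitone l) (hzero : ∀ j, m ≤ j → l j = 0)
    (hEG : ∀ i, i ≤ ((range m).filter (fun t => t + 1 ≤ l t)).card → EGineq m l i) :
    ∀ i, EGineq m l i := by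
  set D := ((range m).filter (fun t => t + 1 ≤ l t)).card with hD
  have hDm : D ≤ m := durfee_le hanti
  have hld : ∀ j, D ≤ j → l j ≤ D := fun j hj => durfee_big_part hanti hzero hj
  -- Step A : for D ≤ i ≤ m
  have stepA : ∀ i, D ≤ i → i ≤ m → EGineq m l i := by
    intro i hDi him
    rcases Nat.eq_or_lt_of_le hDi with rfl | hDi'
    · exact hEG _ le_rfl
    have hEGD := hEG D le_rfl
    rw [EGineq] at hEGD ⊢
    have hminD : ∑ j ∈ Ico D m, min (l j) D = ∑ j ∈ Ico D m, l j :=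
      Finset.sum_congr rfl fun j hj => min_eq_left (hld j (mem_Ico.mp hj).1)
    have hmini : ∑ j ∈ Ico i m, min (l j) i = ∑ j ∈ Ico i m, l j :=
      Finset.sum_congr rfl fun j hj => min_eq_left
        (le_trans (hld j (le_trans hDi (mem_Ico.mp hj).1)) hDi)
    have hsplit1 : ∑ j ∈ Ico D i, l j + ∑ j ∈ Ico i m, l j = ∑ j ∈ Ico D m, l j :=
      Finset.sum_Ico_consecutive _ hDi him
    have hsplit2 : ∑ j ∈ range D, l j + ∑ j ∈ Ico D i, l j = ∑ j ∈ range i, l j := by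
      rw [range_eq_Ico, range_eq_Ico]
      exact Finset.sum_Ico_consecutive _ (Nat.zero_le _) hDi
    have hT : ∑ j ∈ Ico D i, l j ≤ (i - D) * D := by
      calc ∑ j ∈ Ico D i, l j ≤ (Ico D i).card • D :=
            Finset.sum_le_card_nsmul _ _ _ fun j hj => hld j (mem_Ico.mp hj).1
        _ = (i - D) * D := by rw [Nat.card_Ico, smul_eq_mul]
    have harith := eg_arith (show 1 ≤ i - D by omega)
      (show ∑ j ∈ Ico D i, l j ≤ (i - D) * D from hT)
    have hiD : D + (i - D) = i := by omega
    rw [hiD] at harith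
    rw [hminD] at hEGD
    rw [hmini]
    omega
  intro i
  rcases le_or_gt i D with h | h
  · exact hEG i h
  rcases le_or_gt i m with h2 | h2
  · exact stepA i (le_of_lt h) h2
  · -- i > m
    have hEGm := stepA m hDm le_rfl
    rw [EGineq] at hEGm ⊢
    simp only [Ico_self, sum_empty] at hEGm
    have h3 : Ico i m = ∅ := by rw [Ico_eq_empty_iff]; omega
    rw [h3, sum_empty]
    have h4 : ∑ j ∈ range i, l j = ∑ j ∈ range m, l j := by
      rw [range_eq_Ico, ← Finset.sum_Ico_consecutive l (Nat.zero_le m) (le_of_lt h2), range_eq_Ico]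
      have : ∑ j ∈ Ico m i, l j = 0 := Finset.sum_eq_zero fun j hj => hzero j (mem_Ico.mp hj).1
      omega
    have h5 : m * (m - 1) ≤ i * (i - 1) :=
      Nat.mul_le_mul (le_of_lt h2) (by omega)
    have h6 : Ico m m = ∅ := Ico_self m
    omega


section Surgery
variable {V : Type*} [Fintype V] [DecidableEq V]

/-- Add the edge `a b` to `G`. -/
def addE (G : SimpleGraph V) (a b : V) : SimpleGraph V where
  Adj x y := (G.Adj x y ∨ (x = a ∧ y = b) ∨ (x = b ∧ y = a)) ∧ x ≠ y
  symm := by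
    constructor
    intro x y h
    refine ⟨?_, h.2.symm⟩
    rcases h.1 with h1 | h1 | h1
    · exact Or.inl h1.symm
    · exact Or.inr (Or.inr ⟨h1.2, h1.1⟩)
    · exact Or.inr (Or.inl ⟨h1.2, h1.1⟩)
  loopless := ⟨fun x h => h.2 rfl⟩

/-- Delete the edge `a b` from `G`. -/
def delE (G : SimpleGraph V) (a b : V) : SimpleGraph V where
  Adj x y := G.Adj x y ∧ ¬((x = a ∧ y = b) ∨ (x = b ∧ y = a))
  symm := by
    constructor
    intro x y h
    exact ⟨h.1.symm, fun hc => h.2 (by tauto)⟩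
  loopless := ⟨fun x h => G.loopless.irrefl x h.1⟩

variable (G : SimpleGraph V) [DecidableRel G.Adj] (a b : V)

instance : DecidableRel (addE G a b).Adj := fun x y =>
  inferInstanceAs (Decidable ((G.Adj x y ∨ (x = a ∧ y = b) ∨ (x = b ∧ y = a)) ∧ x ≠ y))

instance : DecidableRel (delE G a b).Adj := fun x y =>
  inferInstanceAs (Decidable (G.Adj x y ∧ ¬((x = a ∧ y = b) ∨ (x = b ∧ y = a))))

lemma addE_adj {x y : V} :
    (addE G a b).Adj x y ↔ (G.Adj x y ∨ (x = a ∧ y = b) ∨ (x = b ∧ y = a)) ∧ x ≠ y :=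
  Iff.rfl

lemma delE_adj {x y : V} :
    (delE G a b).Adj x y ↔ G.Adj x y ∧ ¬((x = a ∧ y = b) ∨ (x = b ∧ y = a)) :=
  Iff.rfl

lemma addE_degree_fst (hab : a ≠ b) (h : ¬G.Adj a b) :
    (addE G a b).degree a = G.degree a + 1 := by
  have hnb : (addE G a b).neighborFinset a = insert b (G.neighborFinset a) := by
    ext w
    rw [SimpleGraph.mem_neighborFinset, mem_insert, SimpleGraph.mem_neighborFinset, addE_adj]
    constructor
    · rintro ⟨h1 | h1 | h1, hne⟩
      · exact Or.inr h1
      · exact Or.inl h1.2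
      · exact absurd h1.1 hab
    · rintro (rfl | h1)
      · exact ⟨Or.inr (Or.inl ⟨rfl, rfl⟩), hab⟩
      · exact ⟨Or.inl h1, G.ne_of_adj h1⟩
  rw [SimpleGraph.degree, SimpleGraph.degree, hnb, card_insert_of_notMem (by
    rw [SimpleGraph.mem_neighborFinset]; exact h)]

lemma addE_degree_snd (hab : a ≠ b) (h : ¬G.Adj a b) :
    (addE G a b).degree b = G.degree b + 1 := by
  have hnb : (addE G a b).neighborFinset b = insert a (G.neighborFinset b) := by
    ext w
    rw [SimpleGraph.mem_neighborFinset, mem_insert, SimpleGraph.mem_neighborFinset, addE_adj]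
    constructor
    · rintro ⟨h1 | h1 | h1, hne⟩
      · exact Or.inr h1
      · exact absurd h1.1 hab.symm
      · exact Or.inl h1.2
    · rintro (rfl | h1)
      · exact ⟨Or.inr (Or.inr ⟨rfl, rfl⟩), hab.symm⟩
      · exact ⟨Or.inl h1, G.ne_of_adj h1⟩
  rw [SimpleGraph.degree, SimpleGraph.degree, hnb, card_insert_of_notMem (by
    rw [SimpleGraph.mem_neighborFinset]; exact fun hc => h hc.symm)]

lemma addE_degree_other {v : V} (hva : v ≠ a) (hvb : v ≠ b) :
    (addE G a b).degree v = G.degree v := by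
  have hnb : (addE G a b).neighborFinset v = G.neighborFinset v := by
    ext w
    rw [SimpleGraph.mem_neighborFinset, SimpleGraph.mem_neighborFinset, addE_adj]
    constructor
    · rintro ⟨h1 | h1 | h1, hne⟩
      · exact h1
      · exact absurd h1.1 hva
      · exact absurd h1.1 hvb
    · intro h1; exact ⟨Or.inl h1, G.ne_of_adj h1⟩
  rw [SimpleGraph.degree, SimpleGraph.degree, hnb]

lemma delE_degree_fst (h : G.Adj a b) :
    (delE G a b).degree a + 1 = G.degree a := by
  have hnb : (delE G a b).neighborFinset a = (G.neighborFinset a).erase b := by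
    ext w
    rw [SimpleGraph.mem_neighborFinset, mem_erase, SimpleGraph.mem_neighborFinset, delE_adj]
    constructor
    · rintro ⟨h1, h2⟩
      exact ⟨fun hc => h2 (Or.inl ⟨rfl, hc⟩), h1⟩
    · rintro ⟨hne, h1⟩
      refine ⟨h1, ?_⟩
      rintro (⟨-, hwb⟩ | ⟨-, hwa⟩)
      · exact hne hwb
      · exact G.loopless.irrefl a (hwa ▸ h1)
  have hb : b ∈ G.neighborFinset a := by rw [SimpleGraph.mem_neighborFinset]; exact h
  have hpos : 0 < (G.neighborFinset a).card := card_pos.mpr ⟨b, hb⟩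
  rw [SimpleGraph.degree, SimpleGraph.degree, hnb, card_erase_of_mem hb]
  omega

lemma delE_degree_snd (h : G.Adj a b) :
    (delE G a b).degree b + 1 = G.degree b := by
  have hnb : (delE G a b).neighborFinset b = (G.neighborFinset b).erase a := by
    ext w
    rw [SimpleGraph.mem_neighborFinset, mem_erase, SimpleGraph.mem_neighborFinset, delE_adj]
    constructor
    · rintro ⟨h1, h2⟩
      exact ⟨fun hc => h2 (Or.inr ⟨rfl, hc⟩), h1⟩
    · rintro ⟨hne, h1⟩
      refine ⟨h1, ?_⟩
      rintro (⟨hba, -⟩ | ⟨-, hwb⟩)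
      · exact G.loopless.irrefl b (hba ▸ h)
      · exact hne hwb
  have hb : a ∈ G.neighborFinset b := by rw [SimpleGraph.mem_neighborFinset]; exact h.symm
  have hpos : 0 < (G.neighborFinset b).card := card_pos.mpr ⟨a, hb⟩
  rw [SimpleGraph.degree, SimpleGraph.degree, hnb, card_erase_of_mem hb]
  omega

lemma delE_degree_other {v : V} (hva : v ≠ a) (hvb : v ≠ b) :
    (delE G a b).degree v = G.degree v := by
  have hnb : (delE G a b).neighborFinset v = G.neighborFinset v := by
    ext w
    rw [SimpleGraph.mem_neighborFinset, SimpleGraph.mem_neighborFinset, delE_adj]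
    constructor
    · rintro ⟨h1, -⟩; exact h1
    · intro h1
      refine ⟨h1, ?_⟩
      rintro (⟨hva', -⟩ | ⟨hvb', -⟩)
      · exact hva hva'
      · exact hvb hvb'
  rw [SimpleGraph.degree, SimpleGraph.degree, hnb]

end Surgery

section Count
variable {V : Type*} [Fintype V] [DecidableEq V]

lemma count_ineq (G : SimpleGraph V) [DecidableRel G.Adj] (S : Finset V) :
    ∑ v ∈ S, G.degree v
      ≤ S.card * (S.card - 1) + ∑ w ∈ univ \ S, min (G.degree w) S.card := by
  have hdeg : ∀ v, G.degree v
      = (G.neighborFinset v ∩ S).card + (G.neighborFinset v \ S).card := by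
    intro v
    rw [SimpleGraph.degree, ← card_sdiff_add_card_inter (G.neighborFinset v) S]
    omega
  have hsplit : ∑ v ∈ S, G.degree v
      = ∑ v ∈ S, (G.neighborFinset v ∩ S).card + ∑ v ∈ S, (G.neighborFinset v \ S).card := by
    rw [← Finset.sum_add_distrib]
    exact Finset.sum_congr rfl fun v _ => hdeg v
  have hbound1 : ∑ v ∈ S, (G.neighborFinset v ∩ S).card ≤ S.card * (S.card - 1) := by
    calc ∑ v ∈ S, (G.neighborFinset v ∩ S).card ≤ S.card • (S.card - 1) := by
          apply Finset.sum_le_card_nsmul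
          intro v hv
          have hsub : G.neighborFinset v ∩ S ⊆ S.erase v := by
            intro w hw
            rw [mem_inter] at hw
            rw [mem_erase]
            exact ⟨fun hc => G.loopless.irrefl v ((SimpleGraph.mem_neighborFinset _ _ _).mp (hc ▸ hw.1)),
              hw.2⟩
          calc (G.neighborFinset v ∩ S).card ≤ (S.erase v).card := card_le_card hsub
            _ = S.card - 1 := card_erase_of_mem hv
      _ = S.card * (S.card - 1) := by rw [smul_eq_mul]
  have hbound2 : ∑ v ∈ S, (G.neighborFinset v \ S).card
      ≤ ∑ w ∈ univ \ S, min (G.degree w) S.card := by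
    have hcard : ∀ v, (G.neighborFinset v \ S).card
        = ∑ w ∈ univ \ S, (if G.Adj v w then 1 else 0) := by
      intro v
      rw [← Finset.card_filter]
      congr 1
      ext w
      simp only [mem_sdiff, mem_filter, SimpleGraph.mem_neighborFinset, mem_univ, true_and]
      tauto
    calc ∑ v ∈ S, (G.neighborFinset v \ S).card
        = ∑ v ∈ S, ∑ w ∈ univ \ S, (if G.Adj v w then 1 else 0) :=
          Finset.sum_congr rfl fun v _ => hcard v
      _ = ∑ w ∈ univ \ S, ∑ v ∈ S, (if G.Adj v w then 1 else 0) := Finset.sum_comm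
      _ ≤ ∑ w ∈ univ \ S, min (G.degree w) S.card := by
          apply Finset.sum_le_sum
          intro w hw
          rw [← Finset.card_filter]
          apply le_min
          · calc (S.filter (fun v => G.Adj v w)).card
                ≤ (G.neighborFinset w).card := by
                  apply card_le_card
                  intro v hv
                  rw [SimpleGraph.mem_neighborFinset]
                  exact ((mem_filter.mp hv).2).symm
              _ = G.degree w := rfl
          · exact le_trans (card_filter_le _ _) le_rfl
  omega

end Count

lemma necessity (m : ℕ) (l : ℕ → ℕ) (G : SimpleGraph (Fin m)) [DecidableRel G.Adj]
    (σ : Equiv.Perm (Fin m)) (hdeg : ∀ i : Fin m, G.degree (σ i) = l i)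
    {i : ℕ} (him : i ≤ m) : EGineq m l i := by
  classical
  set F : Finset (Fin m) := univ.filter (fun j : Fin m => (j : ℕ) < i) with hF
  set Fc : Finset (Fin m) := univ.filter (fun j : Fin m => ¬ (j : ℕ) < i) with hFc
  set S : Finset (Fin m) := F.image σ with hS
  have hFimg : F.image Fin.val = range i := by
    ext t
    simp only [mem_image, hF, mem_filter, mem_univ, true_and, mem_range]
    constructor
    · rintro ⟨j, hj, rfl⟩; exact hj
    · intro ht; exact ⟨⟨t, lt_of_lt_of_le ht him⟩, ht, rfl⟩
  have hFcimg : Fc.image Fin.val = Ico i m := by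
    ext t
    simp only [mem_image, hFc, mem_filter, mem_univ, true_and, mem_Ico, not_lt]
    constructor
    · rintro ⟨j, hj, rfl⟩; exact ⟨hj, j.isLt⟩
    · rintro ⟨h1, h2⟩; exact ⟨⟨t, h2⟩, h1, rfl⟩
  have cardF : F.card = i := by
    have h := card_image_of_injective F Fin.val_injective
    rw [hFimg, card_range] at h
    omega
  have cardS : S.card = i := by
    rw [hS, card_image_of_injective _ σ.injective, cardF]
  have hcompl : univ \ S = Fc.image σ := by
    ext v
    simp only [mem_sdiff, mem_univ, true_and, hS, mem_image]
    constructor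
    · intro h
      refine ⟨σ.symm v, ?_, σ.apply_symm_apply v⟩
      simp only [hFc, mem_filter, mem_univ, true_and]
      intro hc
      exact h ⟨σ.symm v, by simp only [hF, mem_filter, mem_univ, true_and]; exact hc,
        σ.apply_symm_apply v⟩
    · rintro ⟨j, hj, rfl⟩ ⟨j', hj', hjj'⟩
      have : j' = j := σ.injective hjj'
      subst this
      simp only [hF, mem_filter, mem_univ, true_and] at hj'
      simp only [hFc, mem_filter, mem_univ, true_and] at hj
      exact hj hj'
  have sum1 : ∑ v ∈ S, G.degree v = ∑ t ∈ range i, l t := by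
    rw [hS, Finset.sum_image (fun x _ y _ h => σ.injective h)]
    rw [Finset.sum_congr rfl (fun j _ => hdeg j)]
    rw [← hFimg, Finset.sum_image (fun x _ y _ h => Fin.val_injective h)]
  have sum2 : ∑ w ∈ univ \ S, min (G.degree w) S.card = ∑ t ∈ Ico i m, min (l t) i := by
    rw [hcompl, Finset.sum_image (fun x _ y _ h => σ.injective h), cardS]
    rw [Finset.sum_congr rfl (fun j _ => by rw [hdeg j])]
    rw [← hFcimg, Finset.sum_image (fun x _ y _ h => Fin.val_injective h)]
  have hc := count_ineq G S
  rw [sum1, sum2, cardS] at hc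
  exact hc

lemma eg_reduce (m n : ℕ) (l l' : ℕ → ℕ) (a b : ℕ)
    (hanti : Antitone l) (hzero : ∀ j, m ≤ j → l j = 0)
    (hsum : ∑ j ∈ range m, l j = n) (heven : Even n)
    (hab : a < b) (hbm : b < m)
    (hconst : ∀ j, j ≤ a → l j = l 0) (hb1 : 1 ≤ l b)
    (hl' : ∀ j, l' j = if j = a ∨ j = b then l j - 1 else l j)
    (hEG : ∀ i, EGineq m l i) :
    ∀ i, EGineq m l' i := by
  have ha1 : 1 ≤ l a := le_trans hb1 (hanti (le_of_lt hab))
  have hl'a : l' a = l a - 1 := by rw [hl']; simp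
  have hl'b : l' b = l b - 1 := by rw [hl']; simp
  have hl'o : ∀ j, j ≠ a → j ≠ b → l' j = l j := by
    intro j h1 h2; rw [hl']; simp [h1, h2]
  have hla0 : l a = l 0 := hconst a le_rfl
  have hl0b : l b ≤ l 0 := hla0 ▸ hanti (le_of_lt hab)
  intro i
  rcases Nat.eq_zero_or_pos i with rfl | hi1
  · simp [EGineq]
  rcases lt_or_ge b i with hbi | hib
  · -- b < i : both decremented positions are in the prefix
    have hL : ∑ j ∈ range i, l' j + 2 = ∑ j ∈ range i, l j := by
      have hbmem : b ∈ range i := mem_range.mpr hbi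
      have hamem : a ∈ (range i).erase b := mem_erase.mpr ⟨Nat.ne_of_lt hab, mem_range.mpr (lt_trans hab hbi)⟩
      have e1 := Finset.add_sum_erase (range i) l' hbmem
      have e2 := Finset.add_sum_erase (range i) l hbmem
      have e3 := Finset.add_sum_erase ((range i).erase b) l' hamem
      have e4 := Finset.add_sum_erase ((range i).erase b) l hamem
      have etail : ∑ j ∈ ((range i).erase b).erase a, l' j
          = ∑ j ∈ ((range i).erase b).erase a, l j := by
        refine Finset.sum_congr rfl fun j hj => ?_
        rw [mem_erase, mem_erase] at hj
        exact hl'o j hj.1 hj.2.1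
      omega
    have hM : ∑ j ∈ Ico i m, min (l' j) i = ∑ j ∈ Ico i m, min (l j) i := by
      refine Finset.sum_congr rfl fun j hj => ?_
      rw [mem_Ico] at hj
      rw [hl'o j (by omega) (by omega)]
    have := hEG i
    rw [EGineq] at this ⊢
    omega
  rcases lt_or_ge a i with hai | hia
  · -- a < i ≤ b
    have hL : ∑ j ∈ range i, l' j + 1 = ∑ j ∈ range i, l j := by
      have hamem : a ∈ range i := mem_range.mpr hai
      have e1 := Finset.add_sum_erase (range i) l' hamem
      have e2 := Finset.add_sum_erase (range i) l hamem
      have etail : ∑ j ∈ (range i).erase a, l' j = ∑ j ∈ (range i).erase a, l j := by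
        refine Finset.sum_congr rfl fun j hj => ?_
        rw [mem_erase, mem_range] at hj
        exact hl'o j hj.1 (by omega)
      omega
    have hM : ∑ j ∈ Ico i m, min (l j) i ≤ ∑ j ∈ Ico i m, min (l' j) i + 1 := by
      have hbmem : b ∈ Ico i m := mem_Ico.mpr ⟨hib, hbm⟩
      have e1 : min (l' b) i + ∑ j ∈ (Ico i m).erase b, min (l' j) i
          = ∑ j ∈ Ico i m, min (l' j) i :=
        Finset.add_sum_erase (Ico i m) (fun j => min (l' j) i) hbmem
      have e2 : min (l b) i + ∑ j ∈ (Ico i m).erase b, min (l j) i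
          = ∑ j ∈ Ico i m, min (l j) i :=
        Finset.add_sum_erase (Ico i m) (fun j => min (l j) i) hbmem
      have etail : ∑ j ∈ (Ico i m).erase b, min (l' j) i
          = ∑ j ∈ (Ico i m).erase b, min (l j) i := by
        refine Finset.sum_congr rfl fun j hj => ?_
        rw [mem_erase, mem_Ico] at hj
        rw [hl'o j (by omega) hj.1]
      have : min (l b) i ≤ min (l' b) i + 1 := by rw [hl'b]; omega
      omega
    have := hEG i
    rw [EGineq] at this ⊢
    omega
  · -- 1 ≤ i ≤ a
    have hL : ∑ j ∈ range i, l' j = ∑ j ∈ range i, l j := by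
      refine Finset.sum_congr rfl fun j hj => ?_
      rw [mem_range] at hj
      exact hl'o j (by omega) (by omega)
    have hLconst : ∑ j ∈ range i, l j = i * l 0 := by
      rw [Finset.sum_congr rfl fun j hj => hconst j (by rw [mem_range] at hj; omega)]
      rw [sum_const, card_range, smul_eq_mul]
    have hamem : a ∈ Ico i m := mem_Ico.mpr ⟨hia, lt_trans hab hbm⟩
    have hbmem : b ∈ Ico i m := mem_Ico.mpr ⟨le_trans hia (le_of_lt hab), hbm⟩
    rcases lt_or_ge i (l b) with hbgt | hble
    · -- no change in the min-sums
      have hM : ∑ j ∈ Ico i m, min (l' j) i = ∑ j ∈ Ico i m, min (l j) i := by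
        refine Finset.sum_congr rfl fun j hj => ?_
        rcases eq_or_ne j a with rfl | hja
        · have : l b ≤ l j := hanti (le_of_lt hab)
          rw [hl'a]; omega
        rcases eq_or_ne j b with rfl | hjb
        · rw [hl'b]; omega
        · rw [hl'o j hja hjb]
      have := hEG i
      rw [EGineq] at this ⊢
      omega
    rcases lt_or_ge i (l a) with hagt | hale
    · -- l b ≤ i < l a = l 0 : need strict slack, via EG at i+1
      have him : i < m := lt_trans (lt_of_le_of_lt hia hab) hbm
      -- M i decomposition at position i
      have hdecomp : ∑ j ∈ Ico i m, min (l j) i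
          = min (l i) i + ∑ j ∈ Ico (i+1) m, min (l j) i :=
        Finset.sum_eq_sum_Ico_succ_bot him _
      have hli : l i = l 0 := hconst i hia
      have hmini : min (l i) i = i := by rw [hli, ← hla0]; omega
      set c := ((Ico (i+1) m).filter (fun j => i + 1 ≤ l j)).card with hc
      set Z := ∑ j ∈ Ico (i+1) m, min (l j) i with hZ
      have hZge : c * i + l b ≤ Z := by
        rw [hZ, ← Finset.sum_filter_add_sum_filter_not (Ico (i+1) m) (fun j => i + 1 ≤ l j)]
        have h1 : ∑ j ∈ (Ico (i+1) m).filter (fun j => i + 1 ≤ l j), min (l j) i = c * i := by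
          rw [Finset.sum_congr rfl fun j hj => ?_, sum_const, smul_eq_mul, hc]
          have := (mem_filter.mp hj).2
          omega
        have hbmem2 : b ∈ (Ico (i+1) m).filter (fun j => ¬ i + 1 ≤ l j) := by
          rw [mem_filter, mem_Ico]
          exact ⟨⟨by omega, hbm⟩, by omega⟩
        have h2 : min (l b) i ≤ ∑ j ∈ (Ico (i+1) m).filter (fun j => ¬ i + 1 ≤ l j), min (l j) i :=
          Finset.single_le_sum (f := fun j => min (l j) i) (fun j _ => Nat.zero_le _) hbmem2
        have h3 : min (l b) i = l b := by omega
        omega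
      have hMeq : ∑ j ∈ Ico i m, min (l j) i = i + Z := by rw [hdecomp, hmini, hZ]
      -- bound on M' from below: drops at most 1 (only at b)
      have hM' : ∑ j ∈ Ico i m, min (l j) i ≤ ∑ j ∈ Ico i m, min (l' j) i + 1 := by
        have e1 : min (l' b) i + ∑ j ∈ (Ico i m).erase b, min (l' j) i
            = ∑ j ∈ Ico i m, min (l' j) i :=
          Finset.add_sum_erase (Ico i m) (fun j => min (l' j) i) hbmem
        have e2 : min (l b) i + ∑ j ∈ (Ico i m).erase b, min (l j) i
            = ∑ j ∈ Ico i m, min (l j) i :=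
          Finset.add_sum_erase (Ico i m) (fun j => min (l j) i) hbmem
        have etail : ∑ j ∈ (Ico i m).erase b, min (l' j) i
            = ∑ j ∈ (Ico i m).erase b, min (l j) i := by
          refine Finset.sum_congr rfl fun j hj => ?_
          rw [mem_erase] at hj
          rcases eq_or_ne j a with rfl | hja
          · rw [hl'a]; rw [hla0] at hagt ⊢; omega
          · rw [hl'o j hja hj.1]
        have : min (l b) i ≤ min (l' b) i + 1 := by rw [hl'b]; omega
        omega
      -- suppose EG' fails at i
      rw [EGineq]
      by_contra hfail
      push_neg at hfail
      have hEGi := hEG i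
      rw [EGineq] at hEGi
      -- tightness
      have htight : ∑ j ∈ range i, l j = i * (i-1) + (i + Z) := by
        rw [← hMeq]; omega
      -- use EG at i+1
      have hEG1 := hEG (i+1)
      rw [EGineq] at hEG1
      have hL1 : ∑ j ∈ range (i+1), l j = (i+1) * l 0 := by
        rw [Finset.sum_congr rfl fun j hj => hconst j (by rw [mem_range] at hj; omega)]
        rw [sum_const, card_range, smul_eq_mul]
      have hM1 : ∑ j ∈ Ico (i+1) m, min (l j) (i+1) ≤ Z + c := by
        have hpt : ∀ j ∈ Ico (i+1) m,
            min (l j) (i+1) ≤ min (l j) i + (if i + 1 ≤ l j then 1 else 0) := by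
          intro j hj
          by_cases h : i + 1 ≤ l j <;> simp [h] <;> omega
        calc ∑ j ∈ Ico (i+1) m, min (l j) (i+1)
            ≤ ∑ j ∈ Ico (i+1) m, (min (l j) i + (if i + 1 ≤ l j then 1 else 0)) :=
              Finset.sum_le_sum hpt
          _ = Z + c := by
              rw [Finset.sum_add_distrib, ← hZ, ← Finset.card_filter, hc]
      -- arithmetic contradiction
      have hii : i * i = i * (i-1) + i := by
        obtain ⟨i', rfl⟩ : ∃ i', i = i' + 1 := ⟨i - 1, by omega⟩
        simp [Nat.add_sub_cancel]; ring
      have hA : i * l 0 = i * i + Z := by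
        rw [hLconst] at htight; omega
      have hBle : (i+1) * l 0 ≤ (i+1) * i + (Z + c) := by
        calc (i+1) * l 0 = ∑ j ∈ range (i+1), l j := hL1.symm
          _ ≤ (i+1) * ((i+1) - 1) + ∑ j ∈ Ico (i+1) m, min (l j) (i+1) := hEG1
          _ ≤ (i+1) * i + (Z + c) := by
              have : (i+1) - 1 = i := by omega
              rw [this]
              omega
      have hexp1 : (i+1) * l 0 = i * l 0 + l 0 := by ring
      have hexp2 : (i+1) * i = i * i + i := by ring
      have hsmall : l 0 ≤ i + c := by
        rw [hexp1, hexp2, hA] at hBle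
        omega
      -- but tightness forces l 0 ≥ i + c + 1
      have hbig : i * (i + c) + 1 ≤ i * l 0 := by
        have h1 : i * i + c * i + 1 ≤ i * i + Z := by
          have := hb1; omega
        have h2 : i * (i + c) = i * i + c * i := by ring
        omega
      have : i * l 0 ≤ i * (i + c) := Nat.mul_le_mul_left i hsmall
      omega
    · -- l 0 ≤ i : parity / tightness argument
      have him : i ≤ m := by omega
      have hlj : ∀ j, l j ≤ i := fun j => by
        have := hanti (Nat.zero_le j); rw [← hla0] at this; omega
      have hM : ∑ j ∈ Ico i m, min (l j) i = ∑ j ∈ Ico i m, l j := by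
        refine Finset.sum_congr rfl fun j _ => ?_
        have := hlj j; omega
      have hM' : ∑ j ∈ Ico i m, min (l' j) i = ∑ j ∈ Ico i m, l' j := by
        refine Finset.sum_congr rfl fun j _ => ?_
        have h1 := hlj j
        have h2 : l' j ≤ l j := by
          rcases eq_or_ne j a with rfl | hja
          · rw [hl'a]; omega
          rcases eq_or_ne j b with rfl | hjb
          · rw [hl'b]; omega
          · rw [hl'o j hja hjb]
        omega
      have hIco : ∑ j ∈ Ico i m, l' j + 2 = ∑ j ∈ Ico i m, l j := by
        have hamem2 : a ∈ Ico i m := hamem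
        have hbmem2 : b ∈ (Ico i m).erase a := mem_erase.mpr ⟨(Nat.ne_of_lt hab).symm, hbmem⟩
        have e1 := Finset.add_sum_erase (Ico i m) l' hamem2
        have e2 := Finset.add_sum_erase (Ico i m) l hamem2
        have e3 := Finset.add_sum_erase ((Ico i m).erase a) l' hbmem2
        have e4 := Finset.add_sum_erase ((Ico i m).erase a) l hbmem2
        have etail : ∑ j ∈ ((Ico i m).erase a).erase b, l' j
            = ∑ j ∈ ((Ico i m).erase a).erase b, l j := by
          refine Finset.sum_congr rfl fun j hj => ?_
          rw [mem_erase, mem_erase] at hj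
          exact hl'o j hj.2.1 hj.1
        omega
      have hn : ∑ j ∈ range i, l j + ∑ j ∈ Ico i m, l j = n := by
        rw [← hsum, range_eq_Ico, range_eq_Ico]
        exact Finset.sum_Ico_consecutive _ (Nat.zero_le _) him
      rw [EGineq]
      by_contra hfail
      push_neg at hfail
      have hEGi := hEG i
      rw [EGineq] at hEGi
      rw [hL, hM'] at hfail
      rw [hM] at hEGi
      -- either tight or off by one
      rcases lt_or_ge (∑ j ∈ range i, l j) (i * (i-1) + ∑ j ∈ Ico i m, l j) with hslack | htight
      · -- off by one exactly: parity contradiction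
        have heq : ∑ j ∈ range i, l j + 1 = i * (i-1) + ∑ j ∈ Ico i m, l j := by omega
        obtain ⟨p, hp⟩ := heven
        have hev2 : Even (i * (i - 1)) := by
          rcases Nat.even_or_odd i with he | ho
          · exact he.mul_right _
          · exact (Nat.Odd.sub_odd ho odd_one).mul_left _
        obtain ⟨q, hq⟩ := hev2
        omega
      · -- tight : direct contradiction
        have hSge : (a + 1 - i) * l 0 + l b ≤ ∑ j ∈ Ico i m, l j := by
          have hsplit : ∑ j ∈ Ico i (a+1), l j + ∑ j ∈ Ico (a+1) m, l j = ∑ j ∈ Ico i m, l j :=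
            Finset.sum_Ico_consecutive _ (by omega) (by omega)
          have h1 : ∑ j ∈ Ico i (a+1), l j = (a + 1 - i) * l 0 := by
            rw [Finset.sum_congr rfl fun j hj => hconst j (by rw [mem_Ico] at hj; omega)]
            rw [sum_const, Nat.card_Ico, smul_eq_mul]
          have h2 : l b ≤ ∑ j ∈ Ico (a+1) m, l j :=
            Finset.single_le_sum (fun j _ => Nat.zero_le _) (mem_Ico.mpr ⟨by omega, hbm⟩)
          omega
        have htight2 : i * l 0 = i * (i-1) + ∑ j ∈ Ico i m, l j := by
          rw [← hLconst]; omega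
        have hll : l 0 ≤ (a + 1 - i) * l 0 := Nat.le_mul_of_pos_left _ (by omega)
        have hge : i * (i-1) + l 0 + 1 ≤ i * l 0 := by omega
        have hsplitl0 : i * l 0 = (i-1) * l 0 + l 0 := by
          obtain ⟨i', rfl⟩ : ∃ i', i = i' + 1 := ⟨i - 1, by omega⟩
          simp [Nat.add_sub_cancel]; ring
        have hup : (i-1) * l 0 ≤ (i-1) * i := Nat.mul_le_mul_left _ (by rw [hla0] at hale; omega)
        have hcomm : (i-1) * i = i * (i-1) := Nat.mul_comm _ _
        omega

theorem realize (n : ℕ) : ∀ (m : ℕ) (l : ℕ → ℕ), Antitone l → (∀ j, m ≤ j → l j = 0) →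
    (∑ j ∈ range m, l j = n) → Even n → (∀ i, EGineq m l i) →
    ∃ (G : SimpleGraph (Fin m)) (_ : DecidableRel G.Adj), ∀ v : Fin m, G.degree v = l v.val := by
  induction n using Nat.strong_induction_on with
  | _ n IH =>
  intro m l hanti hzero hsum heven hEG
  by_cases h0 : n = 0
  · subst h0
    refine ⟨⊥, by infer_instance, fun v => ?_⟩
    rw [SimpleGraph.bot_degree]
    have := Finset.sum_eq_zero_iff.mp hsum v.val (mem_range.mpr v.isLt)
    omega
  have hn2 : 2 ≤ n := by
    obtain ⟨p, hp⟩ := heven; omega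
  -- the last positive index k
  have hex : ((range m).filter (fun j => 0 < l j)).Nonempty := by
    by_contra h
    rw [Finset.not_nonempty_iff_eq_empty, Finset.filter_eq_empty_iff] at h
    have : ∑ j ∈ range m, l j = 0 := Finset.sum_eq_zero fun j hj => by
      have := h hj; omega
    omega
  set k := ((range m).filter (fun j => 0 < l j)).max' hex with hk
  have hkmem := Finset.max'_mem _ hex
  rw [← hk, mem_filter, mem_range] at hkmem
  obtain ⟨hkm, hkpos⟩ := hkmem
  have hkmax : ∀ j, k < j → l j = 0 := by
    intro j hj
    rcases lt_or_ge j m with h | h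
    · by_contra hc
      have hjmem : j ∈ (range m).filter (fun j => 0 < l j) := by
        rw [mem_filter, mem_range]; omega
      have := Finset.le_max' _ j hjmem
      omega
    · exact hzero j h
  have hposle : ∀ j, j ≤ k → 0 < l j := fun j hj => lt_of_lt_of_le hkpos (hanti hj)
  -- l 0 ≤ k from EG at 1
  have hl0k : l 0 ≤ k := by
    have h1 := hEG 1
    rw [EGineq, Finset.sum_range_one] at h1
    have h2 : ∑ j ∈ Ico 1 m, min (l j) 1 = ∑ j ∈ Ico 1 m, (if j ≤ k then 1 else 0) :=
      Finset.sum_congr rfl fun j hj => by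
        rcases le_or_gt j k with h | h
        · have := hposle j h; simp [h]; omega
        · have := hkmax j h; simp [not_le.mpr h]; omega
    have h3 : ∑ j ∈ Ico 1 m, (if j ≤ k then 1 else 0) = k := by
      rw [← Finset.card_filter]
      have : (Ico 1 m).filter (fun j => j ≤ k) = Ico 1 (k+1) := by
        ext j; rw [mem_filter, mem_Ico, mem_Ico]; omega
      rw [this, Nat.card_Ico]
      omega
    omega
  have hk1 : 1 ≤ k := by have := hposle 0 (Nat.zero_le _); omega
  -- the last index attaining the max
  have hsne : ((range (k+1)).filter (fun j => l j = l 0)).Nonempty :=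
    ⟨0, by rw [mem_filter, mem_range]; omega⟩
  set s := ((range (k+1)).filter (fun j => l j = l 0)).max' hsne with hs
  have hsmem := Finset.max'_mem _ hsne
  rw [← hs, mem_filter, mem_range] at hsmem
  obtain ⟨hsk, hls⟩ := hsmem
  have hsmax : ∀ j, s < j → l j < l 0 := by
    intro j hj
    rcases le_or_gt j k with h | h
    · have hle : l j ≤ l 0 := hanti (Nat.zero_le _)
      rcases eq_or_lt_of_le hle with he | hlt
      · exfalso
        have hjmem : j ∈ (range (k+1)).filter (fun j => l j = l 0) := by
          rw [mem_filter, mem_range]; exact ⟨by omega, he⟩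
        have := Finset.le_max' _ j hjmem
        omega
      · exact hlt
    · rw [hkmax j h]; have := hposle 0 (Nat.zero_le _); omega
  set a := if s < k then s else k - 1 with ha
  set b := k with hb
  have haprop : (a = s ∧ s < k) ∨ (a = k - 1 ∧ s = k) := by
    rw [ha]; split_ifs with h
    · exact Or.inl ⟨rfl, h⟩
    · exact Or.inr ⟨rfl, by omega⟩
  have hab : a < b := by rcases haprop with ⟨h, h'⟩ | ⟨h, h'⟩ <;> omega
  have has : a ≤ s := by rcases haprop with ⟨h, h'⟩ | ⟨h, h'⟩ <;> omega
  have hbm : b < m := hkm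
  have hconst : ∀ j, j ≤ a → l j = l 0 := fun j hj =>
    le_antisymm (hanti (Nat.zero_le _)) (hls ▸ hanti (le_trans hj has))
  have hb1 : 1 ≤ l b := hposle k le_rfl
  have ha1 : 1 ≤ l a := hposle a (by omega)
  set l' : ℕ → ℕ := fun j => if j = a ∨ j = b then l j - 1 else l j with hl'def
  have hl'a : l' a = l a - 1 := by rw [hl'def]; simp
  have hl'b : l' b = l b - 1 := by rw [hl'def]; simp
  have hl'o : ∀ j, j ≠ a → j ≠ b → l' j = l j := by
    intro j h1 h2; rw [hl'def]; simp [h1, h2]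
  have hanti' : Antitone l' := by
    apply antitone_nat_of_succ_le
    intro j
    by_cases hja : j = a
    · rw [hja, hl'a]
      rcases eq_or_ne (a + 1) b with hjb | hjb
      · rw [hjb, hl'b]
        have := hanti (le_of_lt hab); omega
      · rw [hl'o (a+1) (by omega) hjb]
        have hlt : l (a + 1) < l 0 := by
          rcases haprop with ⟨h3, h4⟩ | ⟨h1, h2⟩
          · exact hsmax (a+1) (by omega)
          · exact absurd (by omega : a + 1 = b) hjb
        have := hconst a le_rfl
        omega
    by_cases hjb : j = b
    · rw [hjb, hl'b, hl'o (b+1) (by omega) (by omega), hkmax (b+1) (by omega)]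
      omega
    · rw [hl'o j hja hjb]
      have h2 : l' (j+1) ≤ l (j+1) := by
        rcases eq_or_ne (j+1) a with h | h
        · rw [h, hl'a]; omega
        rcases eq_or_ne (j+1) b with h' | h'
        · rw [h', hl'b]; omega
        · rw [hl'o (j+1) h h']
      have := hanti (show j ≤ j + 1 by omega)
      omega
  have hzero' : ∀ j, m ≤ j → l' j = 0 := by
    intro j hj
    rw [hl'o j (by omega) (by omega)]
    exact hzero j hj
  have hsum' : ∑ j ∈ range m, l' j = n - 2 := by
    have hamem : a ∈ range m := mem_range.mpr (by omega)
    have hbmem : b ∈ (range m).erase a := mem_erase.mpr ⟨by omega, mem_range.mpr hbm⟩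
    have e1 : l' a + ∑ j ∈ (range m).erase a, l' j = ∑ j ∈ range m, l' j :=
      Finset.add_sum_erase _ l' hamem
    have e2 : l a + ∑ j ∈ (range m).erase a, l j = ∑ j ∈ range m, l j :=
      Finset.add_sum_erase _ l hamem
    have e3 : l' b + ∑ j ∈ ((range m).erase a).erase b, l' j
        = ∑ j ∈ (range m).erase a, l' j := Finset.add_sum_erase _ l' hbmem
    have e4 : l b + ∑ j ∈ ((range m).erase a).erase b, l j
        = ∑ j ∈ (range m).erase a, l j := Finset.add_sum_erase _ l hbmem
    have etail : ∑ j ∈ ((range m).erase a).erase b, l' j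
        = ∑ j ∈ ((range m).erase a).erase b, l j := by
      refine Finset.sum_congr rfl fun j hj => ?_
      rw [mem_erase, mem_erase] at hj
      exact hl'o j hj.2.1 hj.1
    rw [hl'a] at e1
    rw [hl'b] at e3
    omega
  have heven' : Even (n - 2) := by
    obtain ⟨p, hp⟩ := heven; exact ⟨p - 1, by omega⟩
  have hEG' : ∀ i, EGineq m l' i :=
    eg_reduce m n l l' a b hanti hzero hsum heven hab hbm hconst hb1 (fun j => rfl) hEG
  obtain ⟨G', inst', hdeg'⟩ := IH (n - 2) (by omega) m l' hanti' hzero' hsum' heven' hEG'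
  set av : Fin m := ⟨a, by omega⟩ with hav
  set bv : Fin m := ⟨b, hbm⟩ with hbv
  have havbv : av ≠ bv := by
    intro h
    have := congrArg Fin.val h
    simp [hav, hbv] at this
    omega
  have hava : (av : ℕ) = a := rfl
  have havbval : (bv : ℕ) = b := rfl
  have hdeg'a : G'.degree av = l a - 1 := by rw [hdeg' av, hava, hl'a]
  have hdeg'b : G'.degree bv = l b - 1 := by rw [hdeg' bv, havbval, hl'b]
  by_cases hadj : G'.Adj av bv
  · -- need the switching argument
    set A : Finset (Fin m) := insert av (G'.neighborFinset av) with hA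
    have hcardA : A.card ≤ l 0 := by
      calc A.card ≤ (G'.neighborFinset av).card + 1 := card_insert_le _ _
        _ = G'.degree av + 1 := rfl
        _ ≤ l 0 := by
            have h01 := hconst a le_rfl
            rw [hdeg'a]; omega
    set T : Finset (Fin m) := univ.filter (fun v : Fin m => v.val ≤ k) with hT
    have hcardT : k + 1 ≤ T.card := by
      have hmap : ∀ t ∈ range (k+1), (⟨t % m, Nat.mod_lt t (by omega)⟩ : Fin m) ∈ T := by
        intro t ht
        rw [mem_range] at ht
        rw [hT, mem_filter]
        refine ⟨mem_univ _, ?_⟩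
        simp only
        rw [Nat.mod_eq_of_lt (by omega)]
        omega
      have hinj : ∀ x ∈ range (k+1), ∀ y ∈ range (k+1),
          (⟨x % m, Nat.mod_lt x (by omega)⟩ : Fin m) = ⟨y % m, Nat.mod_lt y (by omega)⟩ →
            x = y := by
        intro x hx y hy hxy
        rw [mem_range] at hx hy
        have := congrArg Fin.val hxy
        simp only at this
        rw [Nat.mod_eq_of_lt (by omega), Nat.mod_eq_of_lt (by omega)] at this
        exact this
      calc k + 1 = (range (k+1)).card := (card_range _).symm
        _ ≤ T.card := Finset.card_le_card_of_injOn _ hmap hinj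
    have hwex : ∃ w ∈ T, w ∉ A := by
      by_contra h
      push_neg at h
      have : T ⊆ A := h
      have := card_le_card this
      omega
    obtain ⟨w, hwT, hwA⟩ := hwex
    have hwk : w.val ≤ k := by
      rw [hT, mem_filter] at hwT; exact hwT.2
    have hwav : w ≠ av := fun h => hwA (h ▸ mem_insert_self _ _)
    have hwadj : ¬ G'.Adj av w := fun h =>
      hwA (mem_insert_of_mem ((SimpleGraph.mem_neighborFinset _ _ _).mpr h))
    have hwbv : w ≠ bv := by
      intro h
      apply hwA
      rw [h]
      exact mem_insert_of_mem ((SimpleGraph.mem_neighborFinset _ _ _).mpr hadj)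
    have hwa : w.val ≠ a := fun h => hwav (Fin.ext h)
    have hwb : w.val ≠ b := fun h => hwbv (Fin.ext h)
    have hdegw : G'.degree w = l w.val := by rw [hdeg' w, hl'o w.val hwa hwb]
    have hlw : l k ≤ l w.val := hanti hwk
    set B : Finset (Fin m) := insert bv (G'.neighborFinset bv) with hB
    have hcardB : B.card ≤ l k := by
      calc B.card ≤ (G'.neighborFinset bv).card + 1 := card_insert_le _ _
        _ = G'.degree bv + 1 := rfl
        _ ≤ l k := by
            have hlbk : l b = l k := by rw [hb]
            rw [hdeg'b]; omega
    have havB : av ∈ B :=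
      mem_insert_of_mem ((SimpleGraph.mem_neighborFinset _ _ _).mpr hadj.symm)
    by_cases hsub : G'.neighborFinset w ⊆ B
    · exfalso
      have hcardw : l w.val ≤ (G'.neighborFinset w).card := by
        rw [show (G'.neighborFinset w).card = G'.degree w from rfl, hdegw]
      have heq : G'.neighborFinset w = B :=
        Finset.eq_of_subset_of_card_le hsub (by omega)
      have : av ∈ G'.neighborFinset w := heq ▸ havB
      rw [SimpleGraph.mem_neighborFinset] at this
      exact hwadj this.symm
    · obtain ⟨x, hxN, hxB⟩ := Finset.not_subset.mp hsub
      have hwx : G'.Adj w x := (SimpleGraph.mem_neighborFinset _ _ _).mp hxN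
      have hxbv : x ≠ bv := fun h => hxB (h ▸ mem_insert_self _ _)
      have hxadj : ¬ G'.Adj bv x := fun h =>
        hxB (mem_insert_of_mem ((SimpleGraph.mem_neighborFinset _ _ _).mpr h))
      have hxav : x ≠ av := fun h => hxB (h ▸ havB)
      have hxw : x ≠ w := fun h => G'.loopless.irrefl w (h ▸ hwx)
      -- G1 = G' - wx, G2 = G1 + (av,w), G3 = G2 + (bv,x)
      have h1 : ¬ (delE G' w x).Adj av w := by
        rw [delE_adj]; rintro ⟨hc, -⟩; exact hwadj hc
      have h2 : ¬ (addE (delE G' w x) av w).Adj bv x := by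
        rw [addE_adj]
        rintro ⟨hc | ⟨hc, -⟩ | ⟨hc, -⟩, -⟩
        · rw [delE_adj] at hc; exact hxadj hc.1
        · exact havbv hc.symm
        · exact hwbv hc.symm
      refine ⟨addE (addE (delE G' w x) av w) bv x, by infer_instance, fun v => ?_⟩
      by_cases hv1 : v = av
      · subst hv1
        rw [addE_degree_other _ _ _ havbv (Ne.symm hxav),
          addE_degree_fst _ _ _ (Ne.symm hwav) h1,
          delE_degree_other _ _ _ (Ne.symm hwav) (Ne.symm hxav), hdeg'a, hava]
        omega
      by_cases hv2 : v = bv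
      · subst hv2
        rw [addE_degree_fst _ _ _ (Ne.symm hxbv) h2,
          addE_degree_other _ _ _ (Ne.symm havbv) (Ne.symm hwbv),
          delE_degree_other _ _ _ (Ne.symm hwbv) (Ne.symm hxbv), hdeg'b, havbval]
        omega
      by_cases hv3 : v = w
      · rw [hv3]
        rw [addE_degree_other _ _ _ hwbv (fun h => hxw h.symm),
          addE_degree_snd _ _ _ (Ne.symm hwav) h1]
        have := delE_degree_fst G' w x hwx
        omega
      by_cases hv4 : v = x
      · rw [hv4]
        rw [addE_degree_snd _ _ _ (Ne.symm hxbv) h2,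
          addE_degree_other _ _ _ hxav hxw]
        have := delE_degree_snd G' w x hwx
        have hxa : x.val ≠ a := fun h => hxav (Fin.ext h)
        have hxb : x.val ≠ b := fun h => hxbv (Fin.ext h)
        rw [hdeg' x, hl'o x.val hxa hxb] at this
        omega
      · rw [addE_degree_other _ _ _ hv2 hv4, addE_degree_other _ _ _ hv1 hv3,
          delE_degree_other _ _ _ hv3 hv4, hdeg' v]
        have hva : v.val ≠ a := fun h => hv1 (Fin.ext h)
        have hvb : v.val ≠ b := fun h => hv2 (Fin.ext h)
        rw [hl'o v.val hva hvb]
  · -- just add the edge av-bv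
    refine ⟨addE G' av bv, by infer_instance, fun v => ?_⟩
    by_cases hv1 : v = av
    · subst hv1
      rw [addE_degree_fst _ _ _ havbv hadj, hdeg'a, hava]
      omega
    by_cases hv2 : v = bv
    · subst hv2
      rw [addE_degree_snd _ _ _ havbv hadj, hdeg'b, havbval]
      omega
    · rw [addE_degree_other _ _ _ hv1 hv2, hdeg' v]
      have hva : v.val ≠ a := fun h => hv1 (Fin.ext h)
      have hvb : v.val ≠ b := fun h => hv2 (Fin.ext h)
      rw [hl'o v.val hva hvb]

/-- Nash-Williams form of the Erdős–Gallai theorem: a partition `λ` of an even integer `n`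
(given as an antitone function `l : ℕ → ℕ`, with `l j` the `(j+1)`-st part, having exactly
`m` positive parts summing to `n`) is the size-ordered degree sequence of a simple graph iff
`∑_{j=1}^i λ'_j ≥ ∑_{j=1}^i λ_j + i` for all `1 ≤ i ≤ D(λ)`, where `λ'` is the conjugate
partition and `D(λ)` is the Durfee square size. -/
theorem graphical_iff_nash_williams (n m : ℕ) (hn : Even n) (l : ℕ → ℕ)
    (hanti : Antitone l)
    (hpos : ∀ j < m, 0 < l j) (hzero : ∀ j, m ≤ j → l j = 0)
    (hsum : ∑ j ∈ Finset.range m, l j = n) :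
    (∃ (G : SimpleGraph (Fin m)) (_ : DecidableRel G.Adj) (σ : Equiv.Perm (Fin m)),
        ∀ i : Fin m, G.degree (σ i) = l i)
      ↔ ∀ i, 1 ≤ i → i ≤ ((Finset.range m).filter (fun t => t + 1 ≤ l t)).card →
          ∑ j ∈ Finset.range i, l j + i
            ≤ ∑ j ∈ Finset.range i, ((Finset.range m).filter (fun t => j + 1 ≤ l t)).card := by
  constructor
  · rintro ⟨G, inst, σ, hdeg⟩ i hi1 hiD
    have hEGi : EGineq m l i :=
      @necessity m l G inst σ hdeg i (le_trans hiD (durfee_le hanti))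
    exact (nw_iff_eg hanti hi1 hiD).mpr hEGi
  · intro hNW
    have hEG : ∀ i, EGineq m l i := by
      apply eg_all m l hanti hzero
      intro i hiD
      rcases Nat.eq_zero_or_pos i with rfl | hi1
      · simp [EGineq]
      · exact (nw_iff_eg hanti hi1 hiD).mp (hNW i hi1 hiD)
    obtain ⟨G, inst, hdeg⟩ := realize n m l hanti hzero hsum hn hEG
    exact ⟨G, inst, Equiv.refl _, fun i => hdeg i⟩
end

section
/- Let S_j and S'_j be independent sums of j i.i.d. Exponential(1) random variables each. For β > 1, P(S'_j / S_j ≥ β) ≤ (1 + (β-1)²/(4β))^{-j}. -/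
open MeasureTheory ProbabilityTheory Real Set

section aux

lemma exp_integrable_expMeasure {s : ℝ} (hs : s < 1) :
    Integrable (fun x => Real.exp (s * x)) (expMeasure 1) ∧
      ∫ x, Real.exp (s * x) ∂(expMeasure 1) = (1 - s)⁻¹ := by
  have hb : (0:ℝ) < 1 - s := by linarith
  have hmeas_pdf : Measurable (fun x => Real.toNNReal (exponentialPDFReal 1 x)) :=
    (measurable_exponentialPDFReal 1).real_toNNReal
  have hμ : expMeasure 1
      = volume.withDensity (fun x => ↑(Real.toNNReal (exponentialPDFReal 1 x))) := rfl
  have key : (fun x => (Real.toNNReal (exponentialPDFReal 1 x)) • Real.exp (s * x))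
      = (Ici (0:ℝ)).indicator (fun x => Real.exp (-(1 - s) * x)) := by
    funext x
    rw [NNReal.smul_def, Real.coe_toNNReal _ (exponentialPDFReal_nonneg one_pos x)]
    unfold exponentialPDFReal gammaPDFReal
    by_cases hx : (0:ℝ) ≤ x
    · simp only [if_pos hx, Set.indicator_of_mem (mem_Ici.2 hx), rpow_one, Real.Gamma_one,
        div_one, sub_self, rpow_zero, mul_one, one_mul, ← Real.exp_add]
      rw [smul_eq_mul, ← Real.exp_add]; congr 1; ring
    · simp [if_neg hx, Set.indicator_of_notMem (fun h => hx (mem_Ici.1 h))]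
  have hind : IntegrableOn (fun x => Real.exp (-(1 - s) * x)) (Ici (0:ℝ)) volume := by
    rw [integrableOn_Ici_iff_integrableOn_Ioi]
    exact exp_neg_integrableOn_Ioi 0 hb
  constructor
  · rw [hμ, integrable_withDensity_iff_integrable_smul hmeas_pdf, key]
    exact hind.integrable_indicator measurableSet_Ici
  · rw [hμ, integral_withDensity_eq_integral_smul hmeas_pdf, key,
      integral_indicator measurableSet_Ici, integral_Ici_eq_integral_Ioi]
    simp only [neg_mul]
    rw [integral_comp_mul_left_Ioi (fun y => Real.exp (-y)) 0 hb, mul_zero,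
      integral_exp_neg_Ioi, neg_zero, Real.exp_zero, smul_eq_mul, mul_one]

lemma mgf_expMeasure {Ω : Type*} [MeasurableSpace Ω] {μ : Measure Ω} {Y : Ω → ℝ}
    (hY : Measurable Y) (hmap : Measure.map Y μ = expMeasure 1) {s : ℝ} (hs : s < 1) :
    mgf Y μ s = (1 - s)⁻¹ ∧ Integrable (fun ω => Real.exp (s * Y ω)) μ := by
  have hint := (exp_integrable_expMeasure hs).1
  have hmm : Measurable fun x : ℝ => Real.exp (s * x) := (measurable_const_mul s).exp
  constructor
  · calc mgf Y μ s = ∫ x, Real.exp (s * x) ∂(Measure.map Y μ) :=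
        (integral_map hY.aemeasurable hmm.aestronglyMeasurable).symm
      _ = (1 - s)⁻¹ := by rw [hmap]; exact (exp_integrable_expMeasure hs).2
  · rw [← hmap] at hint
    exact (integrable_map_measure hmm.aestronglyMeasurable hY.aemeasurable).mp hint

lemma expMeasure_neg_null : expMeasure 1 (Set.Iio 0) = 0 := by
  rw [expMeasure, gammaMeasure, withDensity_apply _ measurableSet_Iio]
  exact lintegral_gammaPDF_of_nonpos le_rfl

end aux

/-- For independent sums `S_j`, `S'_j` of `j` i.i.d. Exponential(1) variables each and `β > 1`,
`P(S'_j/S_j ≥ β) ≤ (1 + (β-1)²/(4β))^{-j}`. -/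
theorem ratio_of_exp_sums_tail {Ω : Type*} [MeasurableSpace Ω] (μ : Measure Ω)
    [IsProbabilityMeasure μ] (j : ℕ) (hj : 0 < j) (E : Fin j ⊕ Fin j → Ω → ℝ)
    (hmeas : ∀ i, Measurable (E i))
    (hindep : iIndepFun E μ)
    (hexp : ∀ i, Measure.map (E i) μ = expMeasure 1)
    (β : ℝ) (hβ : 1 < β) :
    μ {ω | β ≤ (∑ i, E (Sum.inr i) ω) / (∑ i, E (Sum.inl i) ω)}
      ≤ ENNReal.ofReal ((1 + (β - 1) ^ 2 / (4 * β)) ^ j)⁻¹ := by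
  have hβ0 : (0:ℝ) < β := by linarith
  set t : ℝ := (β - 1) / (2 * β) with ht_def
  have ht : 0 < t := div_pos (by linarith) (by linarith)
  have ht1 : t < 1 := by
    rw [div_lt_one (by linarith)]; linarith
  set c : Fin j ⊕ Fin j → ℝ := Sum.elim (fun _ => -β) (fun _ => 1) with hc_def
  set Y : Fin j ⊕ Fin j → Ω → ℝ := fun i ω => c i * E i ω with hY_def
  have hYmeas : ∀ i, Measurable (Y i) := fun i => (hmeas i).const_mul _
  have hYindep : iIndepFun Y μ :=
    hindep.comp (fun i x => c i * x) (fun i => measurable_const_mul _)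
  have hci : ∀ i, t * c i < 1 := by
    rintro (a | b)
    · simp only [hc_def, Sum.elim_inl]
      have : t * -β < 0 := mul_neg_of_pos_of_neg ht (by linarith)
      linarith
    · simpa [hc_def] using ht1
  -- mgf of each Y i
  have hmgfY : ∀ i, mgf (Y i) μ t = (1 - t * c i)⁻¹ := by
    intro i
    have h1 : mgf (Y i) μ t = mgf (E i) μ (t * c i) := by
      unfold mgf
      congr 1
      funext ω
      rw [hY_def]; ring_nf
    rw [h1, (mgf_expMeasure (hmeas i) (hexp i) (hci i)).1]
  have hintY : ∀ i ∈ Finset.univ, Integrable (fun ω => Real.exp (t * Y i ω)) μ := by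
    intro i _
    have := (mgf_expMeasure (hmeas i) (hexp i) (hci i)).2
    simpa [hY_def, mul_assoc] using this
  -- Chernoff bound for X = ∑ Y i
  set X : Ω → ℝ := ∑ i, Y i with hX_def
  have hintX : Integrable (fun ω => Real.exp (t * X ω)) μ := by
    have := hYindep.integrable_exp_mul_sum (fun i => hYmeas i) hintY
    simpa [hX_def] using this
  have hchernoff := measure_ge_le_exp_mul_mgf (X := X) (μ := μ) (t := t) 0 ht.le hintX
  simp only [mul_zero, neg_zero, Real.exp_zero, one_mul] at hchernoff
  have hmgfX : mgf X μ t = ((1 - t * -β)⁻¹) ^ j * ((1 - t * 1)⁻¹) ^ j := by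
    rw [hX_def, hYindep.mgf_sum (fun i => hYmeas i) Finset.univ]
    rw [Fintype.prod_sum_type]
    simp only [hmgfY, hc_def, Sum.elim_inl, Sum.elim_inr, Finset.prod_const, Finset.card_univ,
      Fintype.card_fin]
  -- the arithmetic identity
  have harith : ((1 - t * -β)⁻¹) ^ j * ((1 - t * 1)⁻¹) ^ j
      = ((1 + (β - 1) ^ 2 / (4 * β)) ^ j)⁻¹ := by
    rw [ht_def]
    rw [← mul_pow, ← inv_pow]
    congr 1
    rw [← mul_inv]
    congr 1
    field_simp
    ring
  -- null sets where some E i is negative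
  have hnull : μ (⋃ i, {ω | E i ω < 0}) = 0 := by
    refine measure_iUnion_null fun i => ?_
    have : {ω | E i ω < 0} = E i ⁻¹' Set.Iio 0 := rfl
    rw [this, ← Measure.map_apply (hmeas i) measurableSet_Iio, hexp i]
    exact expMeasure_neg_null
  -- event inclusion
  have hsub : {ω | β ≤ (∑ i, E (Sum.inr i) ω) / (∑ i, E (Sum.inl i) ω)}
      ⊆ {ω | (0:ℝ) ≤ X ω} ∪ ⋃ i, {ω | E i ω < 0} := by
    intro ω hω
    by_cases hneg : ∃ i, E i ω < 0
    · exact Or.inr (Set.mem_iUnion.2 ⟨hneg.choose, hneg.choose_spec⟩)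
    push_neg at hneg
    left
    have hS : 0 ≤ ∑ i, E (Sum.inl i) ω := Finset.sum_nonneg fun i _ => hneg _
    have hXω : X ω = (∑ i, E (Sum.inr i) ω) - β * ∑ i, E (Sum.inl i) ω := by
      rw [hX_def, Finset.sum_apply, Fintype.sum_sum_type]
      simp only [hY_def, hc_def, Sum.elim_inl, Sum.elim_inr, one_mul, neg_mul]
      rw [show (∑ x : Fin j, -(β * E (Sum.inl x) ω)) = -(β * ∑ i : Fin j, E (Sum.inl i) ω) by
        rw [Finset.mul_sum, ← Finset.sum_neg_distrib]]
      ring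
    rcases hS.eq_or_lt with hS0 | hSpos
    · exfalso
      rw [Set.mem_setOf_eq, ← hS0, div_zero] at hω
      linarith
    · rw [Set.mem_setOf_eq, le_div_iff₀ hSpos] at hω
      rw [Set.mem_setOf_eq, hXω]
      linarith
  calc μ {ω | β ≤ (∑ i, E (Sum.inr i) ω) / (∑ i, E (Sum.inl i) ω)}
      ≤ μ ({ω | (0:ℝ) ≤ X ω} ∪ ⋃ i, {ω | E i ω < 0}) := measure_mono hsub
    _ ≤ μ {ω | (0:ℝ) ≤ X ω} + μ (⋃ i, {ω | E i ω < 0}) := measure_union_le _ _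
    _ = μ {ω | (0:ℝ) ≤ X ω} := by rw [hnull, add_zero]
    _ ≤ ENNReal.ofReal ((1 + (β - 1) ^ 2 / (4 * β)) ^ j)⁻¹ := by
        rw [← ENNReal.ofReal_toReal (measure_ne_top μ _)]
        apply ENNReal.ofReal_le_ofReal
        calc (μ {ω | (0:ℝ) ≤ X ω}).toReal ≤ mgf X μ t := hchernoff
          _ = ((1 + (β - 1) ^ 2 / (4 * β)) ^ j)⁻¹ := by rw [hmgfX, harith]
end

section
/- Let λ be a partition of n with at least k distinct column heights λ_1 > ... > λ_k > k and at least k distinct row lengths λ'_1 > ... > λ'_k > k. Deleting the k tallest columns and k longest rows yields a partition of ν = n − ∑_{j=1}^k λ_j − ∑_{j=1}^k λ'_j + k², whose largest part is at most λ'_k − k and whose number of parts is at most λ_k − k. Consequently, the number of partitions of n with prescribed first k parts (λ_1,...,λ_k) and first k conjugate parts (λ'_1,...,λ'_k) equals p_{ν, λ_k−k, λ'_k−k}, the number of partitions of ν into at most λ_k−k parts each of size at most λ'_k−k, provided ν > 0. -/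
open Finset

private lemma dc_mem_iff (S : Finset ℕ) (h : ∀ x ∈ S, ∀ y, y ≤ x → y ∈ S) (x : ℕ) :
    x ∈ S ↔ x < S.card := by
  constructor
  · intro hx
    have hsub : Finset.range (x + 1) ⊆ S := fun y hy =>
      h x hx y (Nat.lt_succ_iff.mp (Finset.mem_range.mp hy))
    have := Finset.card_le_card hsub
    simp [Finset.card_range] at this
    omega
  · intro hx
    by_contra hxS
    have hsub : S ⊆ Finset.range x := by
      intro y hy
      rw [Finset.mem_range]
      by_contra hyx
      exact hxS (h y hy x (Nat.le_of_not_lt hyx))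
    have := Finset.card_le_card hsub
    simp [Finset.card_range] at this
    omega

private lemma antitone_cutoff (l : ℕ →₀ ℕ) (hl : Antitone ⇑l) (c s : ℕ) :
    c + 1 ≤ l s ↔ s < (l.support.filter fun t => c + 1 ≤ l t).card := by
  have hdc : ∀ x ∈ l.support.filter (fun t => c + 1 ≤ l t), ∀ y, y ≤ x →
      y ∈ l.support.filter (fun t => c + 1 ≤ l t) := by
    intro x hx y hyx
    rw [Finset.mem_filter, Finsupp.mem_support_iff] at hx ⊢
    have := hl hyx
    omega
  rw [← dc_mem_iff _ hdc s, Finset.mem_filter, Finsupp.mem_support_iff]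
  omega

noncomputable def cutk (k : ℕ) (l : ℕ →₀ ℕ) : ℕ →₀ ℕ :=
  Finsupp.onFinset (range (l.sum fun _ v => v))
    (fun t => (l.support.filter fun s => k ≤ s ∧ t + k + 1 ≤ l s).card)
    (by
      intro t ht
      obtain ⟨s, hs⟩ := Finset.card_ne_zero.mp ht
      rw [Finset.mem_filter, Finsupp.mem_support_iff] at hs
      have hle : l s ≤ l.sum fun _ v => v :=
        Finset.single_le_sum (f := fun x => l x) (fun i _ => Nat.zero_le _)
          (Finsupp.mem_support_iff.mpr hs.1)
      rw [Finset.mem_range]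
      omega)

@[simp] lemma cutk_apply (k : ℕ) (l : ℕ →₀ ℕ) (t : ℕ) :
    cutk k l t = (l.support.filter fun s => k ≤ s ∧ t + k + 1 ≤ l s).card := rfl

noncomputable def gluek (k : ℕ) (a b : ℕ → ℕ) (m : ℕ →₀ ℕ) : ℕ →₀ ℕ :=
  Finsupp.onFinset (range (k + ∑ j ∈ range k, b j + m.sum fun _ v => v))
    (fun s => if s < k then a s
      else ((range k).filter fun j => s < b j).card
        + (m.support.filter fun t => s - k < m t).card)
    (by
      intro s hs
      rw [Finset.mem_range]
      by_cases h : s < k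
      · omega
      · simp only [if_neg h] at hs
        have : ((range k).filter fun j => s < b j).card ≠ 0
            ∨ (m.support.filter fun t => s - k < m t).card ≠ 0 := by omega
        rcases this with h1 | h2
        · obtain ⟨j, hj⟩ := Finset.card_ne_zero.mp h1
          rw [Finset.mem_filter, Finset.mem_range] at hj
          have : b j ≤ ∑ j ∈ range k, b j :=
            Finset.single_le_sum (f := fun j => b j) (fun i _ => Nat.zero_le _)
              (Finset.mem_range.mpr hj.1)
          omega
        · obtain ⟨t, htm⟩ := Finset.card_ne_zero.mp h2
          rw [Finset.mem_filter] at htm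
          have : m t ≤ m.sum fun _ v => v :=
            Finset.single_le_sum (f := fun x => m x) (fun i _ => Nat.zero_le _) htm.1
          omega)

@[simp] lemma gluek_apply (k : ℕ) (a b : ℕ → ℕ) (m : ℕ →₀ ℕ) (s : ℕ) :
    gluek k a b m s = (if s < k then a s
      else ((range k).filter fun j => s < b j).card
        + (m.support.filter fun t => s - k < m t).card) := rfl

/-- Removing the `k` tallest columns and `k` longest rows of a Young diagram of area `n`,
with prescribed first `k` parts `a 0 > a 1 > ... > a (k-1) > k` and first `k` conjugate
parts `b 0 > ... > b (k-1) > k`, is a bijection onto diagrams of area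
`ν = n - ∑ a - ∑ b + k²` with at most `a (k-1) - k` parts, each at most `b (k-1) - k`.
Hence, provided `ν > 0`, the number of partitions of `n` (encoded as antitone finitely
supported functions `l : ℕ →₀ ℕ`, `l j` being the `(j+1)`-st part) with first `k` parts
given by `a` and first `k` conjugate parts given by `b` equals `p_{ν, a(k-1)-k, b(k-1)-k}`. -/
theorem count_partitions_prescribed_extremities (n k : ℕ) (hk : 0 < k) (a b : ℕ → ℕ)
    (haanti : ∀ i j, i < j → j < k → a j < a i) (hbanti : ∀ i j, i < j → j < k → b j < b i)
    (hak : k < a (k - 1)) (hbk : k < b (k - 1))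
    (ν : ℕ) (hν : 0 < ν)
    (hνdef : (ν : ℤ) = (n : ℤ) - ∑ j ∈ Finset.range k, (a j : ℤ)
        - ∑ j ∈ Finset.range k, (b j : ℤ) + (k : ℤ) ^ 2) :
    Set.ncard {l : ℕ →₀ ℕ | Antitone ⇑l ∧ l.sum (fun _ v => v) = n
        ∧ (∀ j < k, l j = a j)
        ∧ (∀ j < k, (l.support.filter fun t => j + 1 ≤ l t).card = b j)}
      = Set.ncard {l : ℕ →₀ ℕ | Antitone ⇑l ∧ l.sum (fun _ v => v) = ν
          ∧ l.support.card ≤ a (k - 1) - k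
          ∧ ∀ t, l t ≤ b (k - 1) - k} := by
  classical
  have haw : ∀ i j, i ≤ j → j < k → a j ≤ a i := by
    intro i j hij hjk
    rcases lt_or_eq_of_le hij with h | h
    · exact (haanti i j h hjk).le
    · rw [h]
  have hbw : ∀ i j, i ≤ j → j < k → b j ≤ b i := by
    intro i j hij hjk
    rcases lt_or_eq_of_le hij with h | h
    · exact (hbanti i j h hjk).le
    · rw [h]
  have hakj : ∀ j, j < k → k < a j := fun j hj =>
    lt_of_lt_of_le hak (haw j (k - 1) (by omega) (by omega))
  have hbkj : ∀ j, j < k → k < b j := fun j hj =>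
    lt_of_lt_of_le hbk (hbw j (k - 1) (by omega) (by omega))
  -- the key arithmetic identity
  have key : (∑ j ∈ range k, a j) + (∑ j ∈ range k, (b j - k)) + ν = n := by
    have step : ∀ j ∈ range k, (b j : ℤ) = ((b j - k : ℕ) : ℤ) + (k : ℤ) := by
      intro j hj
      rw [Nat.cast_sub (hbkj j (Finset.mem_range.mp hj)).le]
      ring
    have hbsum : (∑ j ∈ range k, (b j : ℤ))
        = (∑ j ∈ range k, ((b j - k : ℕ) : ℤ)) + (k : ℤ) * k := by
      rw [Finset.sum_congr rfl step, Finset.sum_add_distrib, Finset.sum_const,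
        Finset.card_range, nsmul_eq_mul]
    have h2 : ((∑ j ∈ range k, a j : ℕ) : ℤ) + ((∑ j ∈ range k, (b j - k) : ℕ) : ℤ)
        + (ν : ℤ) = (n : ℤ) := by
      push_cast
      rw [pow_two] at hνdef
      linarith [hbsum, hνdef]
    exact_mod_cast h2
  -- forward map well-defined
  have fwd : ∀ l : ℕ →₀ ℕ,
      (Antitone ⇑l ∧ l.sum (fun _ v => v) = n ∧ (∀ j < k, l j = a j)
        ∧ (∀ j < k, (l.support.filter fun t => j + 1 ≤ l t).card = b j)) →
      (Antitone ⇑(cutk k l) ∧ (cutk k l).sum (fun _ v => v) = ν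
        ∧ (cutk k l).support.card ≤ a (k - 1) - k ∧ ∀ t, cutk k l t ≤ b (k - 1) - k) := by
    rintro l ⟨hanti, hsum, hpart, hconj⟩
    have conj : ∀ j, j < k → ∀ s, (j + 1 ≤ l s ↔ s < b j) := by
      intro j hj s
      rw [antitone_cutoff l hanti j s, hconj j hj]
    have hsupp0 : ∀ s, s < k → l s ≠ 0 := by
      intro s hs
      rw [hpart s hs]
      have := hakj s hs
      omega
    refine ⟨?_, ?_, ?_, ?_⟩
    · intro t t' h
      simp only [cutk_apply]
      apply Finset.card_le_card
      intro s hs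
      rw [Finset.mem_filter] at hs ⊢
      exact ⟨hs.1, hs.2.1, by omega⟩
    · -- sum = ν
      have hss : (cutk k l).support ⊆ range n := by
        have h0 : (cutk k l).support ⊆ range (l.sum fun _ v => v) :=
          Finsupp.support_onFinset_subset
        rwa [hsum] at h0
      have hsum' : (cutk k l).sum (fun _ v => v)
          = ∑ s ∈ l.support.filter (fun s => k ≤ s), (l s - k) := by
        rw [Finsupp.sum_of_support_subset _ hss _ (fun i _ => rfl)]
        simp only [cutk_apply, Finset.card_filter]
        rw [Finset.sum_comm, Finset.sum_filter]
        apply Finset.sum_congr rfl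
        intro s hs
        have hls : l s ≤ n := by
          rw [← hsum]
          exact Finset.single_le_sum (f := fun x => l x) (fun i _ => Nat.zero_le _) hs
        by_cases hks : k ≤ s
        · simp only [hks, true_and, if_pos]
          rw [← Finset.card_filter]
          have : (range n).filter (fun t => t + k + 1 ≤ l s) = range (l s - k) := by
            ext t
            simp only [Finset.mem_filter, Finset.mem_range]
            omega
          rw [this, Finset.card_range]
        · simp [hks]
      have hdecomp : n = (∑ j ∈ range k, a j) + ((∑ j ∈ range k, (b j - k))
          + ∑ s ∈ l.support.filter (fun s => k ≤ s), (l s - k)) := by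
        conv_lhs => rw [← hsum]
        rw [Finsupp.sum,
          ← Finset.sum_filter_add_sum_filter_not l.support (fun s => k ≤ s)]
        have hrange : l.support.filter (fun s => ¬ k ≤ s) = range k := by
          ext s
          simp only [Finset.mem_filter, Finsupp.mem_support_iff, Finset.mem_range]
          constructor
          · intro h; omega
          · intro h
            exact ⟨hsupp0 s h, by omega⟩
        have hA : ∑ s ∈ l.support.filter (fun s => ¬ k ≤ s), l s = ∑ j ∈ range k, a j := by
          rw [hrange]
          exact Finset.sum_congr rfl fun s hs => hpart s (Finset.mem_range.mp hs)
        have hmin : ∀ s, min (l s) k = ((range k).filter fun j => j + 1 ≤ l s).card := by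
          intro s
          have : (range k).filter (fun j => j + 1 ≤ l s) = range (min (l s) k) := by
            ext j
            simp only [Finset.mem_filter, Finset.mem_range]
            omega
          rw [this, Finset.card_range]
        have hminsum : ∑ s ∈ l.support.filter (fun s => k ≤ s), min (l s) k
            = ∑ j ∈ range k, (b j - k) := by
          rw [Finset.sum_congr rfl (fun s _ => hmin s)]
          simp only [Finset.card_filter]
          rw [Finset.sum_comm]
          apply Finset.sum_congr rfl
          intro j hj
          rw [Finset.mem_range] at hj
          rw [← Finset.card_filter]
          have : (l.support.filter (fun s => k ≤ s)).filter (fun s => j + 1 ≤ l s)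
              = Ico k (b j) := by
            ext s
            simp only [Finset.mem_filter, Finsupp.mem_support_iff, Finset.mem_Ico]
            constructor
            · rintro ⟨⟨_, hks⟩, hjl⟩
              exact ⟨hks, (conj j hj s).mp hjl⟩
            · rintro ⟨hks, hsb⟩
              have := (conj j hj s).mpr hsb
              exact ⟨⟨by omega, hks⟩, this⟩
          rw [this, Nat.card_Ico]
        have hsplit : ∑ s ∈ l.support.filter (fun s => k ≤ s), l s
            = (∑ s ∈ l.support.filter (fun s => k ≤ s), min (l s) k)
              + ∑ s ∈ l.support.filter (fun s => k ≤ s), (l s - k) := by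
          rw [← Finset.sum_add_distrib]
          exact Finset.sum_congr rfl fun s _ => by omega
        rw [hsplit, hminsum, hA]
        ring
      rw [hsum']
      omega
    · -- support card
      have hsub : (cutk k l).support ⊆ range (a (k - 1) - k) := by
        intro t ht
        rw [Finsupp.mem_support_iff, cutk_apply] at ht
        obtain ⟨s, hs⟩ := Finset.card_ne_zero.mp ht
        rw [Finset.mem_filter, Finsupp.mem_support_iff] at hs
        have h1 : l s ≤ l (k - 1) := hanti (show k - 1 ≤ s by omega)
        rw [hpart (k - 1) (by omega)] at h1
        rw [Finset.mem_range]
        omega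
      have := Finset.card_le_card hsub
      rwa [Finset.card_range] at this
    · intro t
      rw [cutk_apply]
      have hsub : (l.support.filter fun s => k ≤ s ∧ t + k + 1 ≤ l s) ⊆ Ico k (b (k - 1)) := by
        intro s hs
        rw [Finset.mem_filter] at hs
        rw [Finset.mem_Ico]
        have hk1 : (k - 1) + 1 ≤ l s := by omega
        exact ⟨hs.2.1, (conj (k - 1) (by omega) s).mp hk1⟩
      have := Finset.card_le_card hsub
      rwa [Nat.card_Ico] at this
  -- backward map well-defined
  have bwd : ∀ m : ℕ →₀ ℕ,
      (Antitone ⇑m ∧ m.sum (fun _ v => v) = ν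
        ∧ m.support.card ≤ a (k - 1) - k ∧ ∀ t, m t ≤ b (k - 1) - k) →
      (Antitone ⇑(gluek k a b m) ∧ (gluek k a b m).sum (fun _ v => v) = n
        ∧ (∀ j < k, gluek k a b m j = a j)
        ∧ (∀ j < k, ((gluek k a b m).support.filter
            fun t => j + 1 ≤ gluek k a b m t).card = b j)) := by
    rintro m ⟨hmanti, hmsum, hmcard, hmle⟩
    have hc1le : ∀ s, ((range k).filter fun j => s < b j).card ≤ k := by
      intro s
      calc ((range k).filter fun j => s < b j).card ≤ (range k).card :=
            Finset.card_filter_le _ _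
        _ = k := Finset.card_range k
    have hc2le : ∀ s, (m.support.filter fun t => s - k < m t).card ≤ m.support.card :=
      fun s => Finset.card_filter_le _ _
    refine ⟨?_, ?_, ?_, ?_⟩
    · -- antitone
      intro s s' hss'
      simp only [gluek_apply]
      by_cases hs'k : s' < k
      · rw [if_pos hs'k, if_pos (by omega)]
        exact haw s s' hss' hs'k
      · rw [if_neg hs'k]
        by_cases hsk : s < k
        · rw [if_pos hsk]
          have h1 := hc1le s'
          have h2 := hc2le s'
          have h3 : a (k - 1) ≤ a s := haw s (k - 1) (by omega) (by omega)
          omega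
        · rw [if_neg hsk]
          apply add_le_add
          · apply Finset.card_le_card
            intro j hj
            rw [Finset.mem_filter] at hj ⊢
            exact ⟨hj.1, by omega⟩
          · apply Finset.card_le_card
            intro t ht
            rw [Finset.mem_filter] at ht ⊢
            exact ⟨ht.1, by omega⟩
    · -- sum = n
      set B := k + ∑ j ∈ range k, b j + m.sum (fun _ v => v) with hB
      have hkB : k ≤ B := by omega
      have hbB : ∀ j, j < k → b j ≤ B := by
        intro j hj
        have : b j ≤ ∑ j ∈ range k, b j :=
          Finset.single_le_sum (f := fun j => b j) (fun i _ => Nat.zero_le _)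
            (Finset.mem_range.mpr hj)
        omega
      have hmB : ∀ t ∈ m.support, k + m t ≤ B := by
        intro t ht
        have : m t ≤ m.sum fun _ v => v :=
          Finset.single_le_sum (f := fun x => m x) (fun i _ => Nat.zero_le _) ht
        omega
      have hsupB : (gluek k a b m).support ⊆ range B := Finsupp.support_onFinset_subset
      rw [Finsupp.sum_of_support_subset _ hsupB _ (fun i _ => rfl),
        Finset.range_eq_Ico, ← Finset.sum_Ico_consecutive _ (Nat.zero_le k) hkB]
      have hA : ∑ s ∈ Ico 0 k, gluek k a b m s = ∑ j ∈ range k, a j := by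
        rw [← Finset.range_eq_Ico]
        apply Finset.sum_congr rfl
        intro s hs
        rw [Finset.mem_range] at hs
        rw [gluek_apply, if_pos hs]
      have hB1 : ∑ s ∈ Ico k B, gluek k a b m s = (∑ j ∈ range k, (b j - k)) + ν := by
        have hpt : ∀ s ∈ Ico k B, gluek k a b m s
            = ((range k).filter fun j => s < b j).card
              + (m.support.filter fun t => s - k < m t).card := by
          intro s hs
          rw [Finset.mem_Ico] at hs
          rw [gluek_apply, if_neg (by omega)]
        rw [Finset.sum_congr rfl hpt, Finset.sum_add_distrib]
        congr 1
        · simp only [Finset.card_filter]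
          rw [Finset.sum_comm]
          apply Finset.sum_congr rfl
          intro j hj
          rw [Finset.mem_range] at hj
          rw [← Finset.card_filter]
          have : (Ico k B).filter (fun s => s < b j) = Ico k (b j) := by
            ext s
            simp only [Finset.mem_filter, Finset.mem_Ico]
            have := hbB j hj
            omega
          rw [this, Nat.card_Ico]
        · simp only [Finset.card_filter]
          rw [Finset.sum_comm, ← hmsum, Finsupp.sum]
          apply Finset.sum_congr rfl
          intro t ht
          rw [← Finset.card_filter]
          have : (Ico k B).filter (fun s => s - k < m t) = Ico k (k + m t) := by
            ext s
            simp only [Finset.mem_filter, Finset.mem_Ico]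
            have := hmB t ht
            omega
          rw [this, Nat.card_Ico]
          omega
      rw [hA, hB1]
      omega
    · intro j hj
      rw [gluek_apply, if_pos hj]
    · -- conjugate counts
      have hDiff : ∀ j, j < k → ∀ t, (j + 1 ≤ gluek k a b m t ↔ t < b j) := by
        intro j hj t
        by_cases htk : t < k
        · rw [gluek_apply, if_pos htk]
          have h1 := hakj t htk
          have h2 := hbkj j hj
          constructor
          · intro _; omega
          · intro _; omega
        · rw [gluek_apply, if_neg htk]
          constructor
          · intro hle
            by_contra hbj
            have hc2 : (m.support.filter fun t' => t - k < m t') = ∅ := by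
              rw [Finset.filter_eq_empty_iff]
              intro t' _
              have h1 := hmle t'
              have h2 : b (k - 1) ≤ b j := hbw j (k - 1) (by omega) (by omega)
              omega
            have hc1 : ((range k).filter fun j' => t < b j') ⊆ range j := by
              intro j' hj'
              rw [Finset.mem_filter, Finset.mem_range] at hj'
              rw [Finset.mem_range]
              by_contra h
              have : b j' ≤ b j := hbw j j' (by omega) hj'.1
              omega
            have hcard := Finset.card_le_card hc1
            rw [Finset.card_range] at hcard
            rw [hc2, Finset.card_empty] at hle
            omega
          · intro htb
            have hsub : range (j + 1) ⊆ (range k).filter fun j' => t < b j' := by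
              intro j' hj'
              rw [Finset.mem_range] at hj'
              rw [Finset.mem_filter, Finset.mem_range]
              have : b j ≤ b j' := hbw j' j (by omega) hj
              exact ⟨by omega, by omega⟩
            have := Finset.card_le_card hsub
            rw [Finset.card_range] at this
            omega
      intro j hj
      have heq : ((gluek k a b m).support.filter fun t => j + 1 ≤ gluek k a b m t)
          = range (b j) := by
        ext t
        rw [Finset.mem_filter, Finsupp.mem_support_iff, Finset.mem_range, ← hDiff j hj t]
        constructor
        · exact fun h => h.2
        · intro h
          exact ⟨by omega, h⟩
      rw [heq, Finset.card_range]
  -- left inverse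
  have leftinv : ∀ l : ℕ →₀ ℕ, Antitone ⇑l → (∀ j < k, l j = a j) →
      (∀ j < k, (l.support.filter fun t => j + 1 ≤ l t).card = b j) →
      gluek k a b (cutk k l) = l := by
    intro l hanti hpart hconj
    have conj : ∀ j, j < k → ∀ s, (j + 1 ≤ l s ↔ s < b j) := by
      intro j hj s
      rw [antitone_cutoff l hanti j s, hconj j hj]
    ext s
    rw [gluek_apply]
    by_cases hsk : s < k
    · rw [if_pos hsk, hpart s hsk]
    · rw [if_neg hsk]
      have e1 : ((range k).filter fun j => s < b j) = range (min (l s) k) := by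
        ext j
        simp only [Finset.mem_filter, Finset.mem_range]
        constructor
        · rintro ⟨hjk, hsb⟩
          have := (conj j hjk s).mpr hsb
          omega
        · intro hj
          have hjk : j < k := by omega
          exact ⟨hjk, (conj j hjk s).mp (by omega)⟩
      have e2 : ∀ t, (s - k < cutk k l t ↔ t + k + 1 ≤ l s) := by
        intro t
        rw [cutk_apply]
        constructor
        · intro hlt
          by_contra hc
          have hsubF : (l.support.filter fun s' => k ≤ s' ∧ t + k + 1 ≤ l s') ⊆ Ico k s := by
            intro s' hs'
            rw [Finset.mem_filter] at hs'
            rw [Finset.mem_Ico]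
            refine ⟨hs'.2.1, ?_⟩
            by_contra hss
            have : l s' ≤ l s := hanti (show s ≤ s' by omega)
            omega
          have := Finset.card_le_card hsubF
          rw [Nat.card_Ico] at this
          omega
        · intro hts
          have hsubI : Ico k (s + 1) ⊆ l.support.filter
              fun s' => k ≤ s' ∧ t + k + 1 ≤ l s' := by
            intro s' hs'
            rw [Finset.mem_Ico] at hs'
            have hle : l s ≤ l s' := hanti (show s' ≤ s by omega)
            rw [Finset.mem_filter, Finsupp.mem_support_iff]
            exact ⟨by omega, hs'.1, by omega⟩
          have := Finset.card_le_card hsubI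
          rw [Nat.card_Ico] at this
          omega
      have e3 : ((cutk k l).support.filter fun t => s - k < cutk k l t)
          = range (l s - k) := by
        ext t
        rw [Finset.mem_filter, Finsupp.mem_support_iff, Finset.mem_range, e2 t]
        constructor
        · rintro ⟨_, h⟩
          omega
        · intro h
          refine ⟨?_, by omega⟩
          have hmem : s ∈ l.support.filter fun s' => k ≤ s' ∧ t + k + 1 ≤ l s' := by
            rw [Finset.mem_filter, Finsupp.mem_support_iff]
            exact ⟨by omega, by omega, by omega⟩
          rw [cutk_apply]
          exact Finset.card_ne_zero.mpr ⟨s, hmem⟩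
      rw [e1, e3, Finset.card_range, Finset.card_range]
      omega
  -- right inverse
  have rightinv : ∀ m : ℕ →₀ ℕ, Antitone ⇑m → (∀ t, m t ≤ b (k - 1) - k) →
      cutk k (gluek k a b m) = m := by
    intro m hmanti hmle
    ext t
    rw [cutk_apply]
    have key2 : ∀ s, k ≤ s → (t + k + 1 ≤ gluek k a b m s ↔ s - k < m t) := by
      intro s hks
      rw [gluek_apply, if_neg (by omega)]
      have hc1le : ((range k).filter fun j => s < b j).card ≤ k := by
        calc ((range k).filter fun j => s < b j).card ≤ (range k).card :=
              Finset.card_filter_le _ _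
          _ = k := Finset.card_range k
      have hdc : ∀ x ∈ m.support.filter (fun t' => s - k < m t'), ∀ y, y ≤ x →
          y ∈ m.support.filter (fun t' => s - k < m t') := by
        intro x hx y hyx
        rw [Finset.mem_filter, Finsupp.mem_support_iff] at hx ⊢
        have := hmanti hyx
        omega
      have hmemiff := dc_mem_iff _ hdc t
      rw [Finset.mem_filter, Finsupp.mem_support_iff] at hmemiff
      constructor
      · intro h
        exact (hmemiff.mpr (by omega)).2
      · intro h
        have ht2 : t < (m.support.filter fun t' => s - k < m t').card :=
          hmemiff.mp ⟨by omega, h⟩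
        have hc1 : ((range k).filter fun j => s < b j) = range k := by
          rw [Finset.filter_eq_self]
          intro j hj
          rw [Finset.mem_range] at hj
          have h1 := hmle t
          have h2 : b (k - 1) ≤ b j := hbw j (k - 1) (by omega) (by omega)
          omega
        rw [hc1, Finset.card_range]
        omega
    have e : ((gluek k a b m).support.filter
        fun s => k ≤ s ∧ t + k + 1 ≤ gluek k a b m s) = Ico k (k + m t) := by
      ext s
      rw [Finset.mem_filter, Finsupp.mem_support_iff, Finset.mem_Ico]
      constructor
      · rintro ⟨_, hks, hle⟩
        have := (key2 s hks).mp hle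
        exact ⟨hks, by omega⟩
      · rintro ⟨hks, hlt⟩
        have hle := (key2 s hks).mpr (by omega)
        exact ⟨by omega, hks, hle⟩
    rw [e, Nat.card_Ico]
    omega
  -- assemble the bijection
  rw [← Nat.card_coe_set_eq, ← Nat.card_coe_set_eq]
  apply Nat.card_congr
  refine ⟨fun l => ⟨cutk k l.1, fwd l.1 l.2⟩, fun m => ⟨gluek k a b m.1, bwd m.1 m.2⟩, ?_, ?_⟩
  · intro l
    exact Subtype.ext (leftinv l.1 l.2.1 l.2.2.2.1 l.2.2.2.2)
  · intro m
    exact Subtype.ext (rightinv m.1 m.2.1 m.2.2.2.2)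
end
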